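/- arXiv:2102.11351 — 6 statements merged into one kernel-verified Lean document; each statement's English description precedes it below -/
import Mathlib

section
/- Let d ≥ 1 and let μ be a probability measure on ℝ^d (i.e., on Fin d → ℝ) with joint CDF F(x) = μ{y | ∀ i, y_i ≤ x_i} and marginal CDFs F_i(t) = μ{y | y_i ≤ t}. Assume each F_i is continuous. Let ν be the pushforward of μ under the map y ↦ (F_1(y_1), …, F_d(y_d)). Then (a) for each coordinate i, the i-th marginal of ν is the uniform distribution on [0,1] (i.e., ν{u | u_i ≤ t} = t for all t ∈ [0,1]), and (b) for every x ∈ ℝ^d, F(x) = ν{u | ∀ i, u_i ≤ F_i(x_i)}. (Existence part of Sklar's theorem for continuous margins.) -/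
open MeasureTheory Set Filter

-- G monotone from hG
lemma myMono (P : Measure ℝ) [IsProbabilityMeasure P] {G : ℝ → ℝ}
    (hG : ∀ s, G s = (P (Iic s)).toReal) : Monotone G := by
  intro a b hab
  rw [hG, hG]
  exact ENNReal.toReal_mono (measure_ne_top _ _) (measure_mono (Iic_subset_Iic.2 hab))

lemma myTop (P : Measure ℝ) [IsProbabilityMeasure P] {G : ℝ → ℝ}
    (hG : ∀ s, G s = (P (Iic s)).toReal) : Tendsto G atTop (nhds 1) := by
  have : G = ProbabilityTheory.cdf P := by
    ext s; rw [hG, ProbabilityTheory.cdf_eq_real, measureReal_def]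
  rw [this]; exact ProbabilityTheory.tendsto_cdf_atTop P

lemma myBot (P : Measure ℝ) [IsProbabilityMeasure P] {G : ℝ → ℝ}
    (hG : ∀ s, G s = (P (Iic s)).toReal) : Tendsto G atBot (nhds 0) := by
  have : G = ProbabilityTheory.cdf P := by
    ext s; rw [hG, ProbabilityTheory.cdf_eq_real, measureReal_def]
  rw [this]; exact ProbabilityTheory.tendsto_cdf_atBot P

lemma uniform_lemma (P : Measure ℝ) [IsProbabilityMeasure P] {G : ℝ → ℝ}
    (hG : ∀ s, G s = (P (Iic s)).toReal) (hc : Continuous G)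
    {t : ℝ} (ht : t ∈ Icc (0:ℝ) 1) :
    (P {s | G s ≤ t}).toReal = t := by
  set A := {s | G s ≤ t} with hA
  have hmono := myMono P hG
  by_cases huniv : A = univ
  · -- then 1 ≤ t so t = 1
    have h1 : (1:ℝ) ≤ t := by
      refine le_of_tendsto (myTop P hG) ?_
      exact Filter.Eventually.of_forall fun s => (huniv ▸ mem_univ s : s ∈ A)
    have ht1 : t = 1 := le_antisymm ht.2 h1
    simp [huniv, ht1]
  by_cases hemp : A = ∅
  · have h0 : t ≤ 0 := by
      refine ge_of_tendsto (myBot P hG) ?_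
      refine Filter.Eventually.of_forall fun s => ?_
      have : s ∉ A := hemp ▸ notMem_empty s
      exact le_of_lt (lt_of_not_ge this)
    have ht0 : t = 0 := le_antisymm h0 ht.1
    simp [hemp, ht0]
  have hne : A.Nonempty := nonempty_iff_ne_empty.2 hemp
  obtain ⟨b, hb⟩ : ∃ b, b ∉ A := by
    by_contra h; push_neg at h; exact huniv (eq_univ_of_forall h)
  have hbdd : BddAbove A := by
    refine ⟨b, fun s hs => ?_⟩
    by_contra hlt
    exact hb (le_trans (hmono (le_of_lt (lt_of_not_ge hlt))) hs)
  have hclosed : IsClosed A := isClosed_le hc continuous_const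
  set c := sSup A with hc'
  have hcA : c ∈ A := hclosed.csSup_mem hne hbdd
  have hGct : G c ≤ t := hcA
  have htGc : t ≤ G c := by
    have hten : Filter.Tendsto G (nhdsWithin c (Set.Ioi c)) (nhds (G c)) :=
      (hc.tendsto c).mono_left nhdsWithin_le_nhds
    refine ge_of_tendsto hten ?_
    filter_upwards [self_mem_nhdsWithin] with s hs
    have : s ∉ A := fun h => absurd (le_csSup hbdd h) (not_le.2 hs)
    exact le_of_lt (lt_of_not_ge this)
  have hGc : G c = t := le_antisymm hGct htGc
  have hAIic : A = Iic c := by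
    ext s
    constructor
    · exact fun h => le_csSup hbdd h
    · intro h; exact le_trans (hmono h) hGct
  rw [hAIic, ← hG, hGc]

lemma null_lemma (P : Measure ℝ) [IsProbabilityMeasure P] {G : ℝ → ℝ}
    (hG : ∀ s, G s = (P (Iic s)).toReal) (hc : Continuous G) (x : ℝ) :
    P {s | x < s ∧ G s ≤ G x} = 0 := by
  have hmono := myMono P hG
  set A := {s | G s ≤ G x} with hA
  by_cases huniv : A = univ
  · have h1 : (1:ℝ) ≤ G x := by
      refine le_of_tendsto (myTop P hG) ?_
      exact Filter.Eventually.of_forall fun s => (huniv ▸ mem_univ s : s ∈ A)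
    have hPx : P (Iic x) = 1 := by
      have hle : G x ≤ 1 := by
        rw [hG]
        exact ENNReal.toReal_le_of_le_ofReal one_pos.le (by simpa using prob_le_one)
      have : (P (Iic x)).toReal = 1 := le_antisymm (by rw [← hG]; exact hle) (by rw [← hG]; exact h1)
      exact (ENNReal.toReal_eq_one_iff _).1 this
    have hIoi : P (Ioi x) = 0 := by
      have h := prob_compl_eq_one_sub (μ := P) (s := Iic x) measurableSet_Iic
      rw [compl_Iic] at h
      rw [h, hPx]; simp
    refine measure_mono_null ?_ hIoi
    intro s hs; exact hs.1
  · have hne : A.Nonempty := ⟨x, show G x ≤ G x from le_rfl⟩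
    obtain ⟨b, hb⟩ : ∃ b, b ∉ A := by
      by_contra h; push_neg at h; exact huniv (eq_univ_of_forall h)
    have hbdd : BddAbove A := by
      refine ⟨b, fun s hs => ?_⟩
      by_contra hlt
      exact hb (le_trans (hmono (le_of_lt (lt_of_not_ge hlt))) hs)
    have hclosed : IsClosed A := isClosed_le hc continuous_const
    set c := sSup A with hc'
    have hcA : c ∈ A := hclosed.csSup_mem hne hbdd
    have hxc : x ≤ c := le_csSup hbdd (show G x ≤ G x from le_rfl)
    have hGc : G c = G x := le_antisymm hcA (hmono hxc)
    have hPc : P (Iic c) = P (Iic x) := by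
      have : (P (Iic c)).toReal = (P (Iic x)).toReal := by rw [← hG, ← hG, hGc]
      exact (ENNReal.toReal_eq_toReal_iff' (measure_ne_top _ _) (measure_ne_top _ _)).1 this
    have hIoc : P (Ioc x c) = 0 := by
      have hsplit : P (Iic x) + P (Ioc x c) = P (Iic c) := by
        rw [← measure_union (Iic_disjoint_Ioc le_rfl) measurableSet_Ioc,
          Iic_union_Ioc_eq_Iic hxc]
      rw [hPc] at hsplit
      have h2 : P (Iic x) + P (Ioc x c) = P (Iic x) + 0 := by rw [add_zero]; exact hsplit
      exact (ENNReal.add_right_inj (measure_ne_top _ _)).1 h2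
    refine measure_mono_null ?_ hIoc
    intro s hs
    exact ⟨hs.1, le_csSup hbdd hs.2⟩

/-- Existence part of Sklar's theorem for continuous margins: pushing a probability
measure on `ℝ^d` forward through its (continuous) marginal CDFs yields a copula `ν`
(uniform margins on `[0,1]`) such that `F(x) = ν {u | ∀ i, u i ≤ Fᵢ (x i)}`. -/
theorem sklar_existence
    (d : ℕ) (hd : 1 ≤ d)
    (μ : Measure (Fin d → ℝ)) [IsProbabilityMeasure μ]
    (F : (Fin d → ℝ) → ℝ)
    (hF : ∀ x, F x = (μ {y | ∀ i, y i ≤ x i}).toReal)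
    (Fi : Fin d → ℝ → ℝ)
    (hFi : ∀ i t, Fi i t = (μ {y | y i ≤ t}).toReal)
    (hcont : ∀ i, Continuous (Fi i))
    (ν : Measure (Fin d → ℝ))
    (hν : ν = μ.map (fun y i => Fi i (y i))) :
    (∀ i : Fin d, ∀ t ∈ Icc (0 : ℝ) 1, (ν {u | u i ≤ t}).toReal = t) ∧
    (∀ x : Fin d → ℝ, F x = (ν {u | ∀ i, u i ≤ Fi i (x i)}).toReal) := by
  subst hν
  have hφ : Measurable (fun y : Fin d → ℝ => fun i => Fi i (y i)) :=
    measurable_pi_lambda _ fun i => (hcont i).measurable.comp (measurable_pi_apply i)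
  set P : Fin d → Measure ℝ := fun i => μ.map (fun y => y i) with hP
  have hPinst : ∀ i, IsProbabilityMeasure (P i) := fun i =>
    Measure.isProbabilityMeasure_map (measurable_pi_apply i).aemeasurable
  have hGi : ∀ i s, Fi i s = ((P i) (Iic s)).toReal := by
    intro i s
    rw [hFi, hP]
    rw [Measure.map_apply (measurable_pi_apply i) measurableSet_Iic]
    rfl
  constructor
  · intro i t ht
    haveI := hPinst i
    have hset : MeasurableSet {u : Fin d → ℝ | u i ≤ t} :=
      measurableSet_le (measurable_pi_apply i) measurable_const
    have hSmeas : MeasurableSet {s : ℝ | Fi i s ≤ t} :=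
      measurableSet_le (hcont i).measurable measurable_const
    rw [Measure.map_apply hφ hset]
    have h1 : (fun y : Fin d → ℝ => fun i => Fi i (y i)) ⁻¹' {u | u i ≤ t}
        = (fun y : Fin d → ℝ => y i) ⁻¹' {s | Fi i s ≤ t} := rfl
    rw [h1, ← Measure.map_apply (measurable_pi_apply i) hSmeas]
    exact uniform_lemma (P i) (hGi i) (hcont i) ht
  · intro x
    set A := {y : Fin d → ℝ | ∀ i, y i ≤ x i} with hAdef
    set B := {y : Fin d → ℝ | ∀ i, Fi i (y i) ≤ Fi i (x i)} with hBdef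
    have hmono : ∀ i, Monotone (Fi i) := fun i => by
      haveI := hPinst i
      exact myMono (P i) (hGi i)
    have hAB : A ⊆ B := fun y hy i => hmono i (hy i)
    have hnull : μ (B \ A) = 0 := by
      have hsub : B \ A ⊆ ⋃ i, (fun y : Fin d → ℝ => y i) ⁻¹'
          {s | x i < s ∧ Fi i s ≤ Fi i (x i)} := by
        rintro y ⟨hyB, hyA⟩
        simp only [hAdef, mem_setOf_eq, not_forall, not_le] at hyA
        obtain ⟨i, hi⟩ := hyA
        exact mem_iUnion.2 ⟨i, ⟨hi, hyB i⟩⟩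
      refine measure_mono_null hsub (measure_iUnion_null fun i => ?_)
      haveI := hPinst i
      have hSm : MeasurableSet {s : ℝ | x i < s ∧ Fi i s ≤ Fi i (x i)} := by
        have h2 : {s : ℝ | x i < s ∧ Fi i s ≤ Fi i (x i)}
            = Ioi (x i) ∩ {s | Fi i s ≤ Fi i (x i)} := rfl
        rw [h2]
        exact measurableSet_Ioi.inter (measurableSet_le (hcont i).measurable measurable_const)
      have h3 := null_lemma (P i) (hGi i) (hcont i) (x i)
      rwa [hP, Measure.map_apply (measurable_pi_apply i) hSm] at h3
    have hmeasAB : μ B = μ A := by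
      refine le_antisymm ?_ (measure_mono hAB)
      calc μ B ≤ μ (A ∪ (B \ A)) := measure_mono (by
              intro y hy
              by_cases h : y ∈ A
              exacts [Or.inl h, Or.inr ⟨hy, h⟩])
        _ ≤ μ A + μ (B \ A) := measure_union_le _ _
        _ = μ A := by rw [hnull, add_zero]
    have hBset : MeasurableSet {u : Fin d → ℝ | ∀ i, u i ≤ Fi i (x i)} := by
      have h4 : {u : Fin d → ℝ | ∀ i, u i ≤ Fi i (x i)}
          = ⋂ i, {u : Fin d → ℝ | u i ≤ Fi i (x i)} := by ext; simp
      rw [h4]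
      exact MeasurableSet.iInter fun i =>
        measurableSet_le (measurable_pi_apply i) measurable_const
    rw [hF, Measure.map_apply hφ hBset]
    have h5 : (fun y : Fin d → ℝ => fun i => Fi i (y i)) ⁻¹'
        {u | ∀ i, u i ≤ Fi i (x i)} = B := rfl
    rw [h5, hmeasAB]
end

section
/- Let μ be a probability measure on ℝ^d with joint CDF F and continuous marginal CDFs F_1, …, F_d. Suppose ν and ν′ are two probability measures on [0,1]^d, each of whose coordinate margins is uniform on [0,1], with CDFs C(u) = ν{v | ∀ i, v_i ≤ u_i} and C′(u) = ν′{v | ∀ i, v_i ≤ u_i}, such that F(x) = C(F_1(x_1), …, F_d(x_d)) = C′(F_1(x_1), …, F_d(x_d)) for all x ∈ ℝ^d. Then C(u) = C′(u) for all u ∈ [0,1]^d. (Uniqueness part of Sklar's theorem for continuous margins.) -/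
open MeasureTheory Set

section SklarAux

variable {d : ℕ}

private lemma sklar_meas_le (i : Fin d) (t : ℝ) :
    MeasurableSet {v : Fin d → ℝ | v i ≤ t} :=
  measurableSet_le (measurable_pi_apply i) measurable_const

/-- The Lipschitz bound for a copula, ordered version. -/
private lemma sklar_lip (ν : Measure (Fin d → ℝ)) [IsProbabilityMeasure ν]
    (hmarg : ∀ i : Fin d, ∀ t ∈ Icc (0 : ℝ) 1, (ν {v | v i ≤ t}).toReal = t)
    (u w : Fin d → ℝ) (hu : ∀ i, u i ∈ Icc (0 : ℝ) 1) (hw : ∀ i, w i ∈ Icc (0 : ℝ) 1)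
    (huw : ∀ i, u i ≤ w i) :
    (ν {v | ∀ i, v i ≤ w i}).toReal ≤ (ν {v | ∀ i, v i ≤ u i}).toReal + ∑ i, (w i - u i) := by
  have hsub : {v : Fin d → ℝ | ∀ i, v i ≤ w i} ⊆
      {v | ∀ i, v i ≤ u i} ∪ ⋃ i, ({v | v i ≤ w i} \ {v | v i ≤ u i}) := by
    intro v hv
    by_cases h : ∀ i, v i ≤ u i
    · exact Or.inl h
    · push_neg at h
      obtain ⟨i, hi⟩ := h
      exact Or.inr (mem_iUnion.2 ⟨i, ⟨hv i, not_le.2 hi⟩⟩)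
  have h1 : ν {v | ∀ i, v i ≤ w i} ≤
      ν {v | ∀ i, v i ≤ u i} + ∑ i, ν ({v | v i ≤ w i} \ {v | v i ≤ u i}) := by
    refine (measure_mono hsub).trans ((measure_union_le _ _).trans ?_)
    exact add_le_add_right ((measure_iUnion_le _).trans (le_of_eq (tsum_fintype (fun i => ν ({v | v i ≤ w i} \ {v | v i ≤ u i}))))) _
  have hdiff : ∀ i, (ν ({v | v i ≤ w i} \ {v | v i ≤ u i})).toReal = w i - u i := by
    intro i
    have hss : {v : Fin d → ℝ | v i ≤ u i} ⊆ {v | v i ≤ w i} :=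
      fun v hv => le_trans hv (huw i)
    rw [measure_diff hss (sklar_meas_le i (u i)).nullMeasurableSet (measure_ne_top ν _),
      ENNReal.toReal_sub_of_le (measure_mono hss) (measure_ne_top ν _),
      hmarg i _ (hw i), hmarg i _ (hu i)]
  calc (ν {v | ∀ i, v i ≤ w i}).toReal
      ≤ (ν {v | ∀ i, v i ≤ u i} + ∑ i, ν ({v | v i ≤ w i} \ {v | v i ≤ u i})).toReal :=
        ENNReal.toReal_mono (ENNReal.add_ne_top.2 ⟨measure_ne_top _ _,
          ENNReal.sum_ne_top.2 fun i _ => measure_ne_top _ _⟩) h1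
    _ = (ν {v | ∀ i, v i ≤ u i}).toReal
        + ∑ i, (ν ({v | v i ≤ w i} \ {v | v i ≤ u i})).toReal := by
        rw [ENNReal.toReal_add (measure_ne_top _ _)
            (ENNReal.sum_ne_top.2 fun i _ => measure_ne_top _ _),
          ENNReal.toReal_sum (fun i _ => measure_ne_top _ _)]
    _ = (ν {v | ∀ i, v i ≤ u i}).toReal + ∑ i, (w i - u i) := by
        rw [Finset.sum_congr rfl fun i _ => hdiff i]

private lemma sklar_mono (ν : Measure (Fin d → ℝ)) [IsProbabilityMeasure ν]
    (u w : Fin d → ℝ) (huw : ∀ i, u i ≤ w i) :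
    (ν {v | ∀ i, v i ≤ u i}).toReal ≤ (ν {v | ∀ i, v i ≤ w i}).toReal :=
  ENNReal.toReal_mono (measure_ne_top _ _)
    (measure_mono fun v hv i => le_trans (hv i) (huw i))

/-- Lipschitz bound in absolute-value form. -/
private lemma sklar_lip_abs (ν : Measure (Fin d → ℝ)) [IsProbabilityMeasure ν]
    (hmarg : ∀ i : Fin d, ∀ t ∈ Icc (0 : ℝ) 1, (ν {v | v i ≤ t}).toReal = t)
    (u w : Fin d → ℝ) (hu : ∀ i, u i ∈ Icc (0 : ℝ) 1) (hw : ∀ i, w i ∈ Icc (0 : ℝ) 1) :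
    |(ν {v | ∀ i, v i ≤ u i}).toReal - (ν {v | ∀ i, v i ≤ w i}).toReal|
      ≤ ∑ i, |u i - w i| := by
  set m : Fin d → ℝ := fun i => min (u i) (w i) with hm_def
  set M : Fin d → ℝ := fun i => max (u i) (w i) with hM_def
  have hm : ∀ i, m i ∈ Icc (0 : ℝ) 1 :=
    fun i => ⟨le_min (hu i).1 (hw i).1, min_le_of_left_le (hu i).2⟩
  have hM : ∀ i, M i ∈ Icc (0 : ℝ) 1 :=
    fun i => ⟨le_max_of_le_left (hu i).1, max_le (hu i).2 (hw i).2⟩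
  have hlip := sklar_lip ν hmarg m M hm hM (fun i => min_le_max)
  have hsum : ∑ i, (M i - m i) = ∑ i, |u i - w i| := by
    refine Finset.sum_congr rfl fun i _ => ?_
    simp only [hm_def, hM_def, max_sub_min_eq_abs, abs_sub_comm (w i) (u i)]
  have h1 := sklar_mono ν m u (fun i => min_le_left _ _)
  have h2 := sklar_mono ν u M (fun i => le_max_left _ _)
  have h3 := sklar_mono ν m w (fun i => min_le_right _ _)
  have h4 := sklar_mono ν w M (fun i => le_max_right _ _)
  rw [hsum] at hlip
  rw [abs_le]
  constructor <;> linarith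

/-- Every value in `(0,1)` is attained by the continuous margin `Fi i`. -/
private lemma sklar_surj (μ : Measure (Fin d → ℝ)) [IsProbabilityMeasure μ]
    (Fi : Fin d → ℝ → ℝ)
    (hFi : ∀ i t, Fi i t = (μ {y | y i ≤ t}).toReal)
    (hcont : ∀ i, Continuous (Fi i))
    (i : Fin d) (t : ℝ) (ht : t ∈ Ioo (0 : ℝ) 1) : ∃ x, Fi i x = t := by
  have hmono : Monotone (Fi i) := by
    intro a b hab
    rw [hFi, hFi]
    exact ENNReal.toReal_mono (measure_ne_top _ _)
      (measure_mono fun y hy => le_trans hy hab)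
  -- upper limit
  have htop : Filter.Tendsto (fun n : ℕ => Fi i (n : ℝ)) Filter.atTop (nhds 1) := by
    have hmono' : Monotone (fun n : ℕ => {y : Fin d → ℝ | y i ≤ (n : ℝ)}) := by
      intro a b hab y hy
      simp only [mem_setOf_eq] at hy ⊢
      exact le_trans hy (by exact_mod_cast hab)
    have hU : (⋃ n : ℕ, {y : Fin d → ℝ | y i ≤ (n : ℝ)}) = univ := by
      ext y
      simp only [mem_iUnion, mem_univ, iff_true, mem_setOf_eq]
      obtain ⟨n, hn⟩ := exists_nat_ge (y i)
      exact ⟨n, hn⟩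
    have h := tendsto_measure_iUnion_atTop (μ := μ) hmono'
    rw [hU, measure_univ] at h
    have h' := (ENNReal.tendsto_toReal (by norm_num : (1 : ENNReal) ≠ ⊤)).comp h
    simpa [Function.comp_def, hFi] using h'
  -- lower limit
  have hbot : Filter.Tendsto (fun n : ℕ => Fi i (-(n : ℝ))) Filter.atTop (nhds 0) := by
    have hanti : Antitone (fun n : ℕ => {y : Fin d → ℝ | y i ≤ -(n : ℝ)}) := by
      intro a b hab y hy
      simp only [mem_setOf_eq] at hy ⊢
      have : (a : ℝ) ≤ b := by exact_mod_cast hab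
      linarith
    have hI : (⋂ n : ℕ, {y : Fin d → ℝ | y i ≤ -(n : ℝ)}) = ∅ := by
      ext y
      simp only [mem_iInter, mem_empty_iff_false, iff_false, mem_setOf_eq, not_forall, not_le]
      obtain ⟨n, hn⟩ := exists_nat_gt (-(y i))
      exact ⟨n, by linarith⟩
    have h := tendsto_measure_iInter_atTop (μ := μ)
      (s := fun n : ℕ => {y : Fin d → ℝ | y i ≤ -(n : ℝ)})
      (fun n => (sklar_meas_le i (-(n : ℝ))).nullMeasurableSet) hanti
      ⟨0, measure_ne_top _ _⟩
    rw [hI, measure_empty] at h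
    have h' := (ENNReal.tendsto_toReal (by norm_num : (0 : ENNReal) ≠ ⊤)).comp h
    simpa [Function.comp_def, hFi] using h'
  obtain ⟨n₀, hn₀⟩ := (hbot.eventually (eventually_lt_nhds ht.1)).exists
  obtain ⟨n₁, hn₁⟩ := (htop.eventually (eventually_gt_nhds ht.2)).exists
  set N := max n₀ n₁
  have ha : Fi i (-(N : ℝ)) < t :=
    lt_of_le_of_lt (hmono (by
      have : (n₀ : ℝ) ≤ N := by exact_mod_cast le_max_left n₀ n₁
      linarith)) hn₀
  have hb : t < Fi i (N : ℝ) :=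
    lt_of_lt_of_le hn₁ (hmono (by exact_mod_cast le_max_right n₀ n₁))
  have hab : (-(N : ℝ)) ≤ (N : ℝ) := by
    have : (0 : ℝ) ≤ N := Nat.cast_nonneg N
    linarith
  obtain ⟨x, _, hx⟩ := intermediate_value_Icc hab (hcont i).continuousOn ⟨ha.le, hb.le⟩
  exact ⟨x, hx⟩

end SklarAux

/-- Uniqueness part of Sklar's theorem for continuous margins: if two copulas `C`, `C'`
(CDFs of probability measures on `[0,1]^d` with uniform margins) both couple the joint
CDF `F` with its continuous margins `F₁, …, F_d`, then `C = C'` on `[0,1]^d`. -/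
theorem sklar_uniqueness
    (d : ℕ) (hd : 1 ≤ d)
    (μ : Measure (Fin d → ℝ)) [IsProbabilityMeasure μ]
    (F : (Fin d → ℝ) → ℝ)
    (hF : ∀ x, F x = (μ {y | ∀ i, y i ≤ x i}).toReal)
    (Fi : Fin d → ℝ → ℝ)
    (hFi : ∀ i t, Fi i t = (μ {y | y i ≤ t}).toReal)
    (hcont : ∀ i, Continuous (Fi i))
    (ν ν' : Measure (Fin d → ℝ))
    [IsProbabilityMeasure ν] [IsProbabilityMeasure ν']
    (hsupp : ν {v | ∀ i, v i ∈ Icc (0 : ℝ) 1} = 1)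
    (hsupp' : ν' {v | ∀ i, v i ∈ Icc (0 : ℝ) 1} = 1)
    (hmarg : ∀ i : Fin d, ∀ t ∈ Icc (0 : ℝ) 1, (ν {v | v i ≤ t}).toReal = t)
    (hmarg' : ∀ i : Fin d, ∀ t ∈ Icc (0 : ℝ) 1, (ν' {v | v i ≤ t}).toReal = t)
    (C C' : (Fin d → ℝ) → ℝ)
    (hC : ∀ u, C u = (ν {v | ∀ i, v i ≤ u i}).toReal)
    (hC' : ∀ u, C' u = (ν' {v | ∀ i, v i ≤ u i}).toReal)
    (hcouple : ∀ x : Fin d → ℝ, F x = C (fun i => Fi i (x i)))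
    (hcouple' : ∀ x : Fin d → ℝ, F x = C' (fun i => Fi i (x i))) :
    ∀ u : Fin d → ℝ, (∀ i, u i ∈ Icc (0 : ℝ) 1) → C u = C' u := by
  intro u hu
  have hd' : (0 : ℝ) < d := by exact_mod_cast Nat.lt_of_lt_of_le Nat.zero_lt_one hd
  have key : ∀ ε > (0 : ℝ), |C u - C' u| ≤ ε := by
    intro ε hε
    set δ : ℝ := min (ε / d) 1 with hδ_def
    have hδ0 : 0 < δ := lt_min (div_pos hε hd') one_pos
    have hδ1 : δ ≤ 1 := min_le_right _ _
    have hδε : d * δ ≤ ε := by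
      have : δ ≤ ε / d := min_le_left _ _
      calc (d : ℝ) * δ ≤ d * (ε / d) := by nlinarith
        _ = ε := by field_simp
    set u' : Fin d → ℝ := fun i => u i + δ * (1 / 2 - u i) with hu'_def
    have hu' : ∀ i, u' i ∈ Ioo (0 : ℝ) 1 := by
      intro i
      have h1 := (hu i).1
      have h2 := (hu i).2
      have k1 : 0 ≤ (1 - δ) * u i := mul_nonneg (by linarith) h1
      have k2 : 0 ≤ (1 - δ) * (1 - u i) := mul_nonneg (by linarith) (by linarith)
      have hval : u' i = u i + δ * (1 / 2 - u i) := rfl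
      rw [mem_Ioo, hval]
      constructor <;> nlinarith
    have hu'cc : ∀ i, u' i ∈ Icc (0 : ℝ) 1 := fun i => ⟨(hu' i).1.le, (hu' i).2.le⟩
    choose x hx using fun i => sklar_surj μ Fi hFi hcont i (u' i) (hu' i)
    have hxu' : (fun i => Fi i (x i)) = u' := funext hx
    have hmid : C u' = C' u' := by
      have h1 := hcouple x
      have h2 := hcouple' x
      rw [hxu'] at h1 h2
      linarith
    have hlipC : |C u - C u'| ≤ ∑ i, |u i - u' i| := by
      rw [hC, hC]
      exact sklar_lip_abs ν hmarg u u' hu hu'cc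
    have hlipC' : |C' u' - C' u| ≤ ∑ i, |u' i - u i| := by
      rw [hC', hC']
      exact sklar_lip_abs ν' hmarg' u' u hu'cc hu
    have hterm : ∀ i, |u i - u' i| ≤ δ / 2 := by
      intro i
      have h1 := (hu i).1
      have h2 := (hu i).2
      have hval : u' i = u i + δ * (1 / 2 - u i) := rfl
      have heq : u i - u' i = δ * (u i - 1 / 2) := by rw [hval]; ring
      rw [heq, abs_mul, abs_of_pos hδ0]
      have habs : |u i - 1 / 2| ≤ 1 / 2 := by
        rw [abs_le]; constructor <;> linarith
      nlinarith
    have hsum : ∑ i, |u i - u' i| ≤ d * (δ / 2) := by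
      calc ∑ i, |u i - u' i| ≤ ∑ _i : Fin d, (δ / 2) :=
            Finset.sum_le_sum fun i _ => hterm i
        _ = d * (δ / 2) := by simp [Finset.sum_const, mul_comm]
    have hsum' : ∑ i, |u' i - u i| ≤ d * (δ / 2) := by
      have : ∀ i, |u' i - u i| = |u i - u' i| := fun i => abs_sub_comm _ _
      rw [Finset.sum_congr rfl fun i _ => this i]
      exact hsum
    have t1 := abs_sub_le (C u) (C u') (C' u)
    have t2 : |C u' - C' u| = |C' u' - C' u| := by rw [hmid]
    linarith
  have h0 : |C u - C' u| ≤ 0 :=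
    le_of_forall_pos_le_add fun ε hε => (key ε hε).trans (by linarith)
  have h1 : |C u - C' u| = 0 := le_antisymm h0 (abs_nonneg _)
  have := abs_eq_zero.mp h1
  linarith
end

section
/- Let μ be a probability measure on (0,∞) (so μ({0}) = 0) with Laplace transform φ(x) = ∫₀^∞ e^{−xs} dμ(s); then φ : [0,∞) → (0,1] is continuous, strictly decreasing, φ(0) = 1, and φ(x) → 0 as x → ∞; let φ^{−1} : (0,1] → [0,∞) be its inverse. Let M have law μ and let E_1, …, E_d be i.i.d. Exp(1) random variables, with E_1, …, E_d, M mutually independent. Then for all u_1, …, u_d ∈ (0,1], P(φ(E_1/M) ≤ u_1, …, φ(E_d/M) ≤ u_d) = φ(φ^{−1}(u_1) + ⋯ + φ^{−1}(u_d)). (Correctness of the Marshall–Olkin sampling algorithm: the vector (φ(E_j/M))_j has the Archimedean copula with generator φ as its joint CDF.) -/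
open MeasureTheory Set Filter
open scoped ENNReal Topology

/-- If `X` has exponential tail `P(t < X) = e^{-t}` for `t ≥ 0`, then
`P(X ≥ a) = e^{-a}` for `a ≥ 0`. -/
lemma mo_aux_Ici {Ω : Type*} [MeasurableSpace Ω] (P : Measure Ω) [IsProbabilityMeasure P]
    (X : Ω → ℝ) (hX : Measurable X)
    (h : ∀ t ≥ (0 : ℝ), P {ω | t < X ω} = ENNReal.ofReal (Real.exp (-t)))
    {a : ℝ} (ha : 0 ≤ a) :
    P.map X (Ici a) = ENNReal.ofReal (Real.exp (-a)) := by
  have hIoi : ∀ t : ℝ, P.map X (Ioi t) = ENNReal.ofReal (Real.exp (-(max t 0))) := by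
    intro t
    rw [Measure.map_apply hX measurableSet_Ioi]
    rcases le_or_gt 0 t with h0 | h0
    · rw [max_eq_left h0]; exact h t h0
    · rw [max_eq_right h0.le]
      have h1 : P {ω | (0 : ℝ) < X ω} = 1 := by simpa using h 0 le_rfl
      have h2 : (1 : ℝ≥0∞) ≤ P (X ⁻¹' Ioi t) := by
        rw [← h1]
        exact measure_mono fun ω hω => lt_trans h0 hω
      have h3 : P (X ⁻¹' Ioi t) ≤ 1 := prob_le_one
      simp [le_antisymm h3 h2, Real.exp_zero]
  have hset : (⋂ n : ℕ, Ioi (a - 1 / (n + 1))) = Ici a := by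
    ext x
    simp only [mem_iInter, mem_Ioi, mem_Ici]
    constructor
    · intro hx
      by_contra hlt
      push_neg at hlt
      obtain ⟨n, hn⟩ := exists_nat_one_div_lt (sub_pos.2 hlt)
      have := hx n
      linarith
    · intro hx n
      have : (0 : ℝ) < 1 / (n + 1) := by positivity
      linarith
  have hanti : Antitone fun n : ℕ => Ioi (a - 1 / ((n : ℝ) + 1)) := by
    intro n m hnm
    apply Ioi_subset_Ioi
    have h1 : (1 : ℝ) / (m + 1) ≤ 1 / (n + 1) := by
      apply one_div_le_one_div_of_le (by positivity)
      exact_mod_cast by omega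
    linarith
  have h1 := tendsto_measure_iInter_atTop (μ := P.map X)
    (fun n => measurableSet_Ioi.nullMeasurableSet) hanti ⟨0, measure_ne_top _ _⟩
  rw [hset] at h1
  have h2 : Tendsto (fun n : ℕ => (P.map X) (Ioi (a - 1 / (n + 1)))) atTop
      (𝓝 (ENNReal.ofReal (Real.exp (-a)))) := by
    simp only [hIoi]
    have hc : Continuous fun x : ℝ => ENNReal.ofReal (Real.exp (-(max x 0))) :=
      ENNReal.continuous_ofReal.comp
        (Real.continuous_exp.comp (continuous_neg.comp (continuous_id.max continuous_const)))
    have ht : Tendsto (fun n : ℕ => a - 1 / ((n : ℝ) + 1)) atTop (𝓝 a) := by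
      have := tendsto_one_div_add_atTop_nhds_zero_nat (𝕜 := ℝ)
      simpa using tendsto_const_nhds.sub this
    have := (hc.tendsto a).comp ht
    simpa [Function.comp_def, max_eq_left ha] using this
  exact tendsto_nhds_unique h1 h2

/-- Correctness of the Marshall–Olkin sampling algorithm: if `μ` is a probability
measure on `(0,∞)` with Laplace transform `φ` (a strictly decreasing bijection
`[0,∞) → (0,1]` with inverse `φ⁻¹`), `M ~ μ`, and `E₁, …, E_d` are i.i.d. `Exp(1)`
with `E₁, …, E_d, M` mutually independent, then the vector `(φ(Eⱼ/M))ⱼ` has joint CDF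
`φ(φ⁻¹(u₁) + ⋯ + φ⁻¹(u_d))`, the Archimedean copula with generator `φ`. -/
theorem marshall_olkin_sampling_archimedean
    (d : ℕ)
    (μ : Measure ℝ) [IsProbabilityMeasure μ]
    (hsupp : μ {s | s ≤ 0} = 0)
    (φ : ℝ → ℝ)
    (hφ : ∀ x, φ x = ∫ s, Real.exp (-(x * s)) ∂μ)
    (φinv : ℝ → ℝ)
    (hinv : ∀ u ∈ Ioc (0 : ℝ) 1, 0 ≤ φinv u ∧ φ (φinv u) = u)
    (hinv' : ∀ x ≥ (0 : ℝ), φinv (φ x) = x)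
    {Ω : Type*} [MeasurableSpace Ω] (P : Measure Ω) [IsProbabilityMeasure P]
    (M : Ω → ℝ) (hMmeas : Measurable M)
    (hM : P.map M = μ)
    (E : Fin d → Ω → ℝ) (hEmeas : ∀ j, Measurable (E j))
    (hE : ∀ j, ∀ t ≥ (0 : ℝ), P {ω | t < E j ω} = ENNReal.ofReal (Real.exp (-t)))
    (hindep : ProbabilityTheory.iIndepFun
      (Fin.cons M E : Fin (d + 1) → Ω → ℝ) P) :
    ∀ u : Fin d → ℝ, (∀ j, u j ∈ Ioc (0 : ℝ) 1) →
      P {ω | ∀ j, φ (E j ω / M ω) ≤ u j}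
        = ENNReal.ofReal (φ (∑ j, φinv (u j))) := by
  intro u hu
  set t : Fin d → ℝ := fun j => φinv (u j) with ht_def
  have htj : ∀ j, 0 ≤ t j ∧ φ (t j) = u j := fun j => hinv (u j) (hu j)
  -- a.e. positivity of μ
  have hae : ∀ᵐ s ∂μ, 0 < s := by
    rw [Filter.eventually_iff, mem_ae_iff]
    have : {s : ℝ | 0 < s}ᶜ = {s : ℝ | s ≤ 0} := by ext s; simp [not_lt]
    rw [this]; exact hsupp
  -- integrability of exponentials
  have hint : ∀ c : ℝ, 0 ≤ c → Integrable (fun s => Real.exp (-(c * s))) μ := by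
    intro c hc
    refine Integrable.mono' (integrable_const 1) ?_ ?_
    · exact (Real.measurable_exp.comp ((measurable_const.mul measurable_id).neg)
        ).aestronglyMeasurable
    · filter_upwards [hae] with s hs
      rw [Real.norm_eq_abs, abs_of_pos (Real.exp_pos _)]
      exact Real.exp_le_one_iff.2 (neg_nonpos.2 (mul_nonneg hc hs.le))
  -- antitonicity of φ on [0, ∞)
  have hmono : ∀ x y : ℝ, 0 ≤ x → x ≤ y → φ y ≤ φ x := by
    intro x y hx hxy
    rw [hφ x, hφ y]
    refine integral_mono_ae (hint y (hx.trans hxy)) (hint x hx) ?_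
    filter_upwards [hae] with s hs
    exact Real.exp_le_exp.2 (by nlinarith)
  -- key equivalence
  have hkey : ∀ (j : Fin d) (x : ℝ), 0 ≤ x → (φ x ≤ u j ↔ t j ≤ x) := by
    intro j x hx
    constructor
    · intro h
      by_contra hlt
      push_neg at hlt
      have h1 : φ (t j) ≤ φ x := hmono x (t j) hx hlt.le
      have h2 : φ x = φ (t j) := le_antisymm (h.trans (htj j).2.symm.le) h1
      have h3 : x = t j := by
        have hx' := hinv' x hx
        have htt := hinv' (t j) (htj j).1
        rw [← hx', h2, htt]
      exact absurd h3 hlt.ne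
    · intro h
      calc φ x ≤ φ (t j) := hmono (t j) x (htj j).1 h
        _ = u j := (htj j).2
  -- null sets
  have hM0 : P {ω | M ω ≤ 0} = 0 := by
    have h := Measure.map_apply (μ := P) hMmeas (measurableSet_Iic (a := (0 : ℝ)))
    rw [hM] at h
    exact h.symm.trans hsupp
  have hE0 : ∀ j, P {ω | ¬0 < E j ω} = 0 := by
    intro j
    have h1 : P {ω | 0 < E j ω} = 1 := by simpa using hE j 0 le_rfl
    have h2 : MeasurableSet {ω | 0 < E j ω} := (hEmeas j) measurableSet_Ioi
    have h3 := (prob_compl_eq_zero_iff h2).2 h1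
    have h4 : {ω | 0 < E j ω}ᶜ = {ω | ¬0 < E j ω} := rfl
    rwa [h4] at h3
  have haeM : ∀ᵐ ω ∂P, 0 < M ω := by
    rw [Filter.eventually_iff, mem_ae_iff]
    have : {ω | 0 < M ω}ᶜ = {ω | M ω ≤ 0} := by ext ω; simp [not_lt]
    rw [this]; exact hM0
  have haeE : ∀ᵐ ω ∂P, ∀ j, 0 < E j ω := by
    rw [ae_all_iff]
    intro j
    rw [Filter.eventually_iff, mem_ae_iff]
    exact hE0 j
  -- rewrite the event a.e.
  have hAB : {ω | ∀ j, φ (E j ω / M ω) ≤ u j} =ᵐ[P] {ω | ∀ j, t j * M ω ≤ E j ω} := by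
    filter_upwards [haeM, haeE] with ω hMω hEω
    simp only [Set.mem_setOf_eq, eq_iff_iff]
    constructor
    · intro h j
      have hx : 0 ≤ E j ω / M ω := (div_pos (hEω j) hMω).le
      have := (hkey j _ hx).1 (h j)
      exact (le_div_iff₀ hMω).1 this
    · intro h j
      have hx : 0 ≤ E j ω / M ω := (div_pos (hEω j) hMω).le
      exact (hkey j _ hx).2 ((le_div_iff₀ hMω).2 (h j))
  rw [measure_congr hAB]
  -- joint law is the product measure
  set f : Fin (d + 1) → Ω → ℝ := Fin.cons M E with hf_def
  have hfmeas : ∀ i, Measurable (f i) := by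
    intro i
    induction i using Fin.cases with
    | zero => simpa [hf_def] using hMmeas
    | succ j => simpa [hf_def] using hEmeas j
  set F : Ω → Fin (d + 1) → ℝ := fun ω i => f i ω with hF_def
  have hF : Measurable F := measurable_pi_lambda _ hfmeas
  set ν : Fin (d + 1) → Measure ℝ := fun i => P.map (f i) with hν_def
  haveI : ∀ i, IsProbabilityMeasure (ν i) :=
    fun i => Measure.isProbabilityMeasure_map (hfmeas i).aemeasurable
  have hpi : Measure.pi ν = P.map F := by
    refine Measure.pi_eq fun s hs => ?_
    rw [Measure.map_apply hF (MeasurableSet.univ_pi hs)]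
    have h1 : F ⁻¹' univ.pi s = ⋂ i, f i ⁻¹' s i := by
      ext ω; simp [hF_def, Set.mem_pi]
    rw [h1]
    have h2 := hindep.measure_inter_preimage_eq_mul Finset.univ (fun i _ => hs i)
    simp only [Finset.mem_univ, Set.iInter_true, Set.iInter_iInter_eq_right] at h2
    rw [h2]
    refine Finset.prod_congr rfl fun i _ => ?_
    rw [hν_def]
    rw [Measure.map_apply (hfmeas i) (hs i)]
  -- the event as a preimage
  set S : Set (Fin (d + 1) → ℝ) := {x | ∀ j : Fin d, t j * x 0 ≤ x j.succ} with hS_def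
  have hSm : MeasurableSet S := by
    have : S = ⋂ j : Fin d, {x : Fin (d + 1) → ℝ | t j * x 0 ≤ x j.succ} := by
      ext x; simp [hS_def]
    rw [this]
    exact MeasurableSet.iInter fun j =>
      measurableSet_le ((measurable_pi_apply (X := fun _ : Fin (d + 1) => ℝ) 0).const_mul (t j)) (measurable_pi_apply j.succ)
  have hBS : {ω | ∀ j, t j * M ω ≤ E j ω} = F ⁻¹' S := by
    ext ω; simp [hF_def, hS_def, hf_def, Fin.cons_zero, Fin.cons_succ]
  rw [hBS, ← Measure.map_apply hF hSm, ← hpi]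
  -- split off the first coordinate
  set e := MeasurableEquiv.piFinSuccAbove (fun _ : Fin (d + 1) => ℝ) 0 with he_def
  have hmp := measurePreserving_piFinSuccAbove ν 0
  set T : Set (ℝ × (Fin d → ℝ)) := {p | ∀ j : Fin d, t j * p.1 ≤ p.2 j} with hT_def
  have hTm : MeasurableSet T := by
    have : T = ⋂ j : Fin d, {p : ℝ × (Fin d → ℝ) | t j * p.1 ≤ p.2 j} := by
      ext p; simp [hT_def]
    rw [this]
    exact MeasurableSet.iInter fun j =>
      measurableSet_le (measurable_fst.const_mul (t j))
        ((measurable_pi_apply j).comp measurable_snd)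
  have heT : e ⁻¹' T = S := by
    ext x
    simp [he_def, hT_def, hS_def, MeasurableEquiv.piFinSuccAbove_apply, Fin.removeNth,
      Fin.zero_succAbove, Fin.tail]
  have hν0 : ν 0 = μ := by rw [hν_def]; simp only [hf_def, Fin.cons_zero]; exact hM
  have hνsucc : ∀ j : Fin d, ν ((0 : Fin (d+1)).succAbove j) = P.map (E j) := by
    intro j
    rw [hν_def]
    simp [hf_def, Fin.zero_succAbove, Fin.cons_succ]
  have hmain : Measure.pi ν S = ((ν 0).prod (Measure.pi fun j => ν ((0 : Fin (d+1)).succAbove j))) T := by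
    rw [← heT]
    exact hmp.measure_preimage hTm.nullMeasurableSet
  rw [hmain, Measure.prod_apply hTm]
  -- compute the inner measure
  have hinner : ∀ s : ℝ, 0 < s →
      (Measure.pi fun j => ν ((0 : Fin (d+1)).succAbove j)) (Prod.mk s ⁻¹' T)
        = ENNReal.ofReal (Real.exp (-((∑ j, t j) * s))) := by
    intro s hs
    have h1 : Prod.mk s ⁻¹' T = univ.pi fun j : Fin d => Ici (t j * s) := by
      ext y; simp only [Set.mem_preimage, hT_def, Set.mem_setOf_eq, Set.mem_pi, Set.mem_univ,
        Set.mem_Ici, forall_true_left, true_implies]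
    rw [h1, Measure.pi_pi]
    have h2 : ∀ j : Fin d, ν ((0 : Fin (d+1)).succAbove j) (Ici (t j * s))
        = ENNReal.ofReal (Real.exp (-(t j * s))) := by
      intro j
      rw [hνsucc j]
      exact mo_aux_Ici P (E j) (hEmeas j) (hE j) (mul_nonneg (htj j).1 hs.le)
    simp only [h2]
    rw [← ENNReal.ofReal_prod_of_nonneg (fun j _ => (Real.exp_pos _).le)]
    congr 1
    rw [← Real.exp_sum]
    congr 1
    rw [Finset.sum_neg_distrib, Finset.sum_mul]
  rw [hν0]
  have hlint : ∫⁻ s, (Measure.pi fun j => ν ((0 : Fin (d+1)).succAbove j)) (Prod.mk s ⁻¹' T) ∂μ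
      = ∫⁻ s, ENNReal.ofReal (Real.exp (-((∑ j, t j) * s))) ∂μ := by
    refine lintegral_congr_ae ?_
    filter_upwards [hae] with s hs
    exact hinner s hs
  rw [hlint]
  have hc : 0 ≤ ∑ j, t j := Finset.sum_nonneg fun j _ => (htj j).1
  rw [← ofReal_integral_eq_lintegral_ofReal (hint _ hc)
    (Filter.Eventually.of_forall fun s => (Real.exp_pos _).le)]
  congr 1
  rw [hφ (∑ j, t j)]
end

section
/- Let μ be a probability measure on (0,∞) with Laplace transform φ(x) = ∫₀^∞ e^{−xs} dμ(s), which is a continuous strictly decreasing bijection from [0,∞) onto (0,1], with inverse φ^{−1}. Let M have law μ and let E be an Exp(1) random variable independent of M. Then φ(E/M) is uniformly distributed on [0,1]: P(φ(E/M) ≤ u) = u for every u ∈ [0,1]. (The margins produced by the Marshall–Olkin sampler are uniform, so the construction yields a valid copula.) -/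
open MeasureTheory Set Filter Topology

/-- The margins produced by the Marshall–Olkin sampler are uniform: if `μ` is a
probability measure on `(0,∞)` with Laplace transform `φ`, `M ~ μ`, and `E ~ Exp(1)`
independent of `M`, then `P(φ(E/M) ≤ u) = u` for every `u ∈ [0,1]`. -/
theorem marshall_olkin_margin_uniform
    (μ : Measure ℝ) [IsProbabilityMeasure μ]
    (hsupp : μ {s | s ≤ 0} = 0)
    (φ : ℝ → ℝ)
    (hφ : ∀ x, φ x = ∫ s, Real.exp (-(x * s)) ∂μ)
    {Ω : Type*} [MeasurableSpace Ω] (P : Measure Ω) [IsProbabilityMeasure P]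
    (M : Ω → ℝ) (hMmeas : Measurable M)
    (hM : P.map M = μ)
    (E : Ω → ℝ) (hEmeas : Measurable E)
    (hE : ∀ t ≥ (0 : ℝ), P {ω | t < E ω} = ENNReal.ofReal (Real.exp (-t)))
    (hindep : ProbabilityTheory.IndepFun E M P) :
    ∀ u ∈ Icc (0 : ℝ) 1,
      P {ω | φ (E ω / M ω) ≤ u} = ENNReal.ofReal u := by
  -- a.e. positivity of s under μ
  have hae : ∀ᵐ s ∂μ, 0 < s := by
    rw [ae_iff]
    convert hsupp using 2
    ext s; simp [not_lt]
  -- integrability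
  have hint : ∀ x : ℝ, 0 ≤ x → Integrable (fun s => Real.exp (-(x * s))) μ := by
    intro x hx
    refine Integrable.mono' (integrable_const 1) ?_ ?_
    · exact (Real.continuous_exp.comp (continuous_const.mul continuous_id).neg).aestronglyMeasurable
    · filter_upwards [hae] with s hs
      rw [Real.norm_eq_abs, abs_of_pos (Real.exp_pos _)]
      rw [show (1:ℝ) = Real.exp 0 by simp]
      exact Real.exp_le_exp.mpr (by nlinarith)
  -- strict antitonicity on [0,∞)
  have hanti : StrictAntiOn φ (Ici 0) := by
    intro x hx y hy hxy
    rw [hφ x, hφ y]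
    have hxint := hint x hx
    have hyint := hint y (le_trans hx hxy.le)
    have hsub : 0 < ∫ s, (Real.exp (-(x * s)) - Real.exp (-(y * s))) ∂μ := by
      rw [integral_pos_iff_support_of_nonneg_ae]
      · have h1 : ({s : ℝ | 0 < s} : Set ℝ) =ᵐ[μ] (univ : Set ℝ) := by
          rw [ae_eq_univ]
          have hc : ({s : ℝ | 0 < s} : Set ℝ)ᶜ = {s | s ≤ 0} := by ext s; simp [not_lt]
          rw [hc]; exact hsupp
        have h2 : μ {s : ℝ | 0 < s} = 1 := by rw [measure_congr h1, measure_univ]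
        have h3 : {s : ℝ | 0 < s} ⊆
            Function.support (fun s => Real.exp (-(x * s)) - Real.exp (-(y * s))) := by
          intro s hs
          simp only [mem_setOf_eq] at hs
          simp only [Function.mem_support]
          have hlt : Real.exp (-(y * s)) < Real.exp (-(x * s)) :=
            Real.exp_lt_exp.mpr (by nlinarith)
          intro h; linarith [sub_eq_zero.mp h]
        calc (0:ENNReal) < 1 := by norm_num
          _ = μ {s : ℝ | 0 < s} := h2.symm
          _ ≤ _ := measure_mono h3
      · filter_upwards [hae] with s hs
        have : Real.exp (-(y * s)) < Real.exp (-(x * s)) :=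
          Real.exp_lt_exp.mpr (by nlinarith)
        simp only [Pi.zero_apply]; linarith
      · exact hxint.sub hyint
    have := integral_sub hxint hyint
    rw [this] at hsub
    linarith
  -- continuity on [0,∞)
  have hcont : ContinuousOn φ (Ici 0) := by
    intro x₀ hx₀
    have h : ContinuousWithinAt (fun x => ∫ s, Real.exp (-(x * s)) ∂μ) (Ici 0) x₀ := by
      apply continuousWithinAt_of_dominated (bound := fun _ => (1:ℝ))
      · filter_upwards with x
        exact (Real.continuous_exp.comp (continuous_const.mul continuous_id).neg).aestronglyMeasurable
      · filter_upwards [self_mem_nhdsWithin] with x hx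
        filter_upwards [hae] with s hs
        rw [Real.norm_eq_abs, abs_of_pos (Real.exp_pos _)]
        rw [show (1:ℝ) = Real.exp 0 by simp]
        refine Real.exp_le_exp.mpr (by nlinarith [mem_Ici.mp hx])
      · exact integrable_const 1
      · filter_upwards with s
        exact (Real.continuous_exp.comp ((continuous_id.mul continuous_const).neg)).continuousWithinAt
    exact h.congr (fun x _ => hφ x) (hφ x₀)
  -- tendsto 0 at infinity
  have htend : Tendsto φ atTop (𝓝 0) := by
    have hφeq : φ = fun x => ∫ s, Real.exp (-(x * s)) ∂μ := funext hφ
    rw [hφeq]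
    have : Tendsto (fun x => ∫ s, Real.exp (-(x * s)) ∂μ) atTop (𝓝 (∫ s, (0:ℝ) ∂μ)) := by
      apply tendsto_integral_filter_of_dominated_convergence (bound := fun _ => (1:ℝ))
      · filter_upwards with x
        exact (Real.continuous_exp.comp (continuous_const.mul continuous_id).neg).aestronglyMeasurable
      · filter_upwards [eventually_ge_atTop (0:ℝ)] with x hx
        filter_upwards [hae] with s hs
        rw [Real.norm_eq_abs, abs_of_pos (Real.exp_pos _)]
        rw [show (1:ℝ) = Real.exp 0 by simp]
        exact Real.exp_le_exp.mpr (by nlinarith)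
      · exact integrable_const 1
      · filter_upwards [hae] with s hs
        have h1 : Tendsto (fun x : ℝ => x * s) atTop atTop :=
          Tendsto.atTop_mul_const hs tendsto_id
        have h2 : Tendsto (fun x : ℝ => -(x * s)) atTop atBot :=
          tendsto_neg_atTop_atBot.comp h1
        exact Real.tendsto_exp_atBot.comp h2
    simpa using this
  -- φ 0 = 1
  have hφ0 : φ 0 = 1 := by
    rw [hφ]; simp
  -- φ positive on [0,∞)
  have hφpos : ∀ x : ℝ, 0 ≤ x → 0 < φ x := by
    intro x hx
    rw [hφ]
    rw [integral_pos_iff_support_of_nonneg_ae (ae_of_all _ fun s => (Real.exp_pos _).le) (hint x hx)]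
    have hs : Function.support (fun s => Real.exp (-(x * s))) = univ := by
      ext s; simp [Real.exp_ne_zero]
    rw [hs, measure_univ]; norm_num
  -- a.e. positivity of M and E
  have hMpos : ∀ᵐ ω ∂P, 0 < M ω := by
    rw [ae_iff]
    have : {ω | ¬ 0 < M ω} = M ⁻¹' {s | s ≤ 0} := by ext ω; simp [not_lt]
    rw [this, ← Measure.map_apply hMmeas (by exact measurableSet_Iic : MeasurableSet {s : ℝ | s ≤ 0}), hM]
    exact hsupp
  have hEpos : ∀ᵐ ω ∂P, 0 < E ω := by
    have h1 : P {ω | 0 < E ω} = 1 := by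
      rw [hE 0 le_rfl]; simp
    rw [ae_iff]
    have h2 : {ω | ¬ 0 < E ω} = {ω | 0 < E ω}ᶜ := by ext ω; simp
    rw [h2]
    have hms : MeasurableSet {ω | 0 < E ω} := measurableSet_lt measurable_const hEmeas
    rw [measure_compl hms (measure_ne_top P _), h1, measure_univ]
    simp
  -- law of E
  set ν := P.map E with hνdef
  have hνprob : IsProbabilityMeasure ν := Measure.isProbabilityMeasure_map hEmeas.aemeasurable
  have hνIoi : ∀ t : ℝ, 0 ≤ t → ν (Ioi t) = ENNReal.ofReal (Real.exp (-t)) := by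
    intro t ht
    rw [hνdef, Measure.map_apply hEmeas measurableSet_Ioi]
    exact hE t ht
  have hνIci : ∀ t : ℝ, 0 ≤ t → ν (Ici t) = ENNReal.ofReal (Real.exp (-t)) := by
    intro t ht
    rcases eq_or_lt_of_le ht with h0 | h0
    · subst h0
      have hle : ν (Ici (0:ℝ)) ≤ 1 := prob_le_one
      have hge : ENNReal.ofReal (Real.exp (-(0:ℝ))) ≤ ν (Ici 0) := by
        rw [← hνIoi 0 le_rfl]
        exact measure_mono Ioi_subset_Ici_self
      simp only [neg_zero, Real.exp_zero, ENNReal.ofReal_one] at hge ⊢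
      exact le_antisymm hle hge
    · have hatom : ν {t} = 0 := by
        have key : ∀ ε : ℝ, 0 < ε → ε ≤ t →
            ν {t} ≤ ENNReal.ofReal (Real.exp (-(t - ε)) - Real.exp (-t)) := by
          intro ε hε hεt
          have hsub : {t} ⊆ Ioi (t - ε) \ Ioi t := by
            intro x hx
            rw [mem_singleton_iff] at hx
            subst hx
            constructor
            · exact mem_Ioi.mpr (by linarith)
            · simp
          calc ν {t} ≤ ν (Ioi (t - ε) \ Ioi t) := measure_mono hsub
            _ = ν (Ioi (t - ε)) - ν (Ioi t) :=
                measure_diff (Ioi_subset_Ioi (by linarith)) measurableSet_Ioi.nullMeasurableSet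
                  (measure_ne_top ν _)
            _ = ENNReal.ofReal (Real.exp (-(t - ε))) - ENNReal.ofReal (Real.exp (-t)) := by
                rw [hνIoi _ (by linarith), hνIoi _ h0.le]
            _ = ENNReal.ofReal (Real.exp (-(t - ε)) - Real.exp (-t)) :=
                (ENNReal.ofReal_sub _ (Real.exp_pos _).le).symm
        have hlim : Tendsto (fun ε : ℝ => ENNReal.ofReal (Real.exp (-(t - ε)) - Real.exp (-t)))
            (𝓝[>] 0) (𝓝 0) := by
          have hc : Tendsto (fun ε : ℝ => Real.exp (-(t - ε)) - Real.exp (-t)) (𝓝 0)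
              (𝓝 (Real.exp (-(t - 0)) - Real.exp (-t))) := by
            exact ((Real.continuous_exp.comp (continuous_const.sub continuous_id).neg).sub
              continuous_const).tendsto 0
          have hc' : Tendsto (fun ε : ℝ => Real.exp (-(t - ε)) - Real.exp (-t)) (𝓝[>] 0) (𝓝 0) := by
            simpa using hc.mono_left nhdsWithin_le_nhds
          have := (ENNReal.continuous_ofReal.tendsto 0).comp hc'
          simpa [Function.comp_def] using this
        have hev : ∀ᶠ ε in 𝓝[>] (0:ℝ),
            ν {t} ≤ ENNReal.ofReal (Real.exp (-(t - ε)) - Real.exp (-t)) := by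
          filter_upwards [Ioc_mem_nhdsGT h0] with ε hε
          exact key ε hε.1 hε.2
        exact le_antisymm (ge_of_tendsto hlim hev) zero_le
      have hIci : Ici t = {t} ∪ Ioi t := by
        ext x
        simp only [mem_Ici, mem_union, mem_singleton_iff, mem_Ioi]
        constructor
        · intro h; rcases eq_or_lt_of_le h with h'|h'; exact Or.inl h'.symm; exact Or.inr h'
        · rintro (h|h); exact h.ge; exact h.le
      rw [hIci]
      refine le_antisymm ?_ ?_
      · calc ν ({t} ∪ Ioi t) ≤ ν {t} + ν (Ioi t) := measure_union_le _ _
          _ = ENNReal.ofReal (Real.exp (-t)) := by rw [hatom, hνIoi t ht, zero_add]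
      · rw [← hνIoi t ht]
        exact measure_mono subset_union_right
  -- joint law
  have hjoint : P.map (fun ω => (M ω, E ω)) = μ.prod ν := by
    have h := (ProbabilityTheory.indepFun_iff_map_prod_eq_prod_map_map hMmeas.aemeasurable
      hEmeas.aemeasurable).mp hindep.symm
    rw [h, hM]
  -- main computation
  intro u hu
  rcases eq_or_lt_of_le hu.1 with hu0 | hu0
  · -- u = 0
    have hnull : ∀ᵐ ω ∂P, ω ∉ {ω | φ (E ω / M ω) ≤ u} := by
      filter_upwards [hMpos, hEpos] with ω hMω hEω
      simp only [mem_setOf_eq, not_le]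
      rw [← hu0]
      exact hφpos _ (div_pos hEω hMω).le
    rw [measure_eq_zero_iff_ae_notMem.mpr hnull, ← hu0, ENNReal.ofReal_zero]
  · -- u ∈ (0,1]
    obtain ⟨R, hR0, hRu⟩ : ∃ R : ℝ, 0 ≤ R ∧ φ R < u := by
      have h1 := htend.eventually (Iio_mem_nhds hu0)
      have h2 := eventually_ge_atTop (0:ℝ)
      obtain ⟨R, hR1, hR2⟩ := (h1.and h2).exists
      exact ⟨R, hR2, hR1⟩
    obtain ⟨x₀, hx₀mem, hx₀⟩ : ∃ x₀ ∈ Icc (0:ℝ) R, φ x₀ = u := by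
      have h := intermediate_value_Icc' hR0 (hcont.mono (Icc_subset_Ici_self))
      have : u ∈ Icc (φ R) (φ 0) := ⟨hRu.le, hφ0 ▸ hu.2⟩
      exact h this
    have hx₀0 : 0 ≤ x₀ := hx₀mem.1
    -- event rewrite
    have hset : {ω | φ (E ω / M ω) ≤ u} =ᵐ[P] {ω | x₀ * M ω ≤ E ω} := by
      rw [Filter.eventuallyEq_set]
      filter_upwards [hMpos, hEpos] with ω hMω hEω
      rw [← hx₀, hanti.le_iff_ge (mem_Ici.mpr (div_pos hEω hMω).le) (mem_Ici.mpr hx₀0),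
        le_div_iff₀ hMω]
    rw [measure_congr hset]
    -- compute via joint law
    have hSmeas : MeasurableSet {p : ℝ × ℝ | x₀ * p.1 ≤ p.2} :=
      measurableSet_le (measurable_const.mul measurable_fst) measurable_snd
    have h1 : P {ω | x₀ * M ω ≤ E ω} = (μ.prod ν) {p : ℝ × ℝ | x₀ * p.1 ≤ p.2} := by
      rw [← hjoint, Measure.map_apply (hMmeas.prodMk hEmeas) hSmeas]
      rfl
    rw [h1, Measure.prod_apply hSmeas]
    have h2 : ∫⁻ m, ν (Prod.mk m ⁻¹' {p : ℝ × ℝ | x₀ * p.1 ≤ p.2}) ∂μ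
        = ∫⁻ m, ENNReal.ofReal (Real.exp (-(x₀ * m))) ∂μ := by
      apply lintegral_congr_ae
      filter_upwards [hae] with m hm
      have : Prod.mk m ⁻¹' {p : ℝ × ℝ | x₀ * p.1 ≤ p.2} = Ici (x₀ * m) := by
        ext e; simp [mem_Ici]
      rw [this]
      exact hνIci _ (mul_nonneg hx₀0 hm.le)
    rw [h2, ← ofReal_integral_eq_lintegral_ofReal (hint x₀ hx₀0)
      (ae_of_all _ fun s => (Real.exp_pos _).le), ← hφ, hx₀]
end

section
/- Let μ_0 be a probability measure on [0,∞) with Laplace transform φ_0, let J ≥ 1, and for each j ∈ {1, …, J} let ψ_j : [0,∞) → [0,∞) and let κ_j be a measurable family of probability measures on [0,∞) indexed by t ∈ [0,∞) such that ∫₀^∞ e^{−ys} dκ_j(t)(s) = e^{−t ψ_j(y)} for all t, y ≥ 0. Let ν be the probability measure on [0,∞)^J obtained by first sampling t from μ_0 and then sampling the J coordinates independently from κ_1(t), …, κ_J(t) (i.e., ν = μ_0.bind(t ↦ ⊗_j κ_j(t))). Then for all y_1, …, y_J ≥ 0, ∫ exp(−∑_{j=1}^J y_j s_j) dν(s) =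 φ_0(∑_{j=1}^J ψ_j(y_j)). (Multivariate Laplace transform of independent subordinator values evaluated at a common random time; the core identity of the Hering–Hofert–Mai–Scherer construction.) -/
open MeasureTheory Set


lemma aux_measurable_pi {J : ℕ} (κ : Fin J → ℝ → Measure ℝ)
    (hm : ∀ j, Measurable (κ j)) (hp : ∀ j t, IsProbabilityMeasure (κ j t)) :
    Measurable (fun t => Measure.pi (fun j => κ j t)) := by
  rw [Measure.measurable_measure]
  intro s hs
  refine MeasurableSpace.induction_on_inter
    (C := fun s _ => Measurable fun t => Measure.pi (fun j => κ j t) s)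
    generateFrom_pi.symm isPiSystem_pi ?_ ?_ ?_ ?_ s hs
  · simp only [measure_empty]; exact measurable_const
  · rintro t ⟨S, hS, rfl⟩
    have key : ∀ x : ℝ, Measure.pi (fun j => κ j x) (Set.pi univ S) = ∏ j, κ j x (S j) := by
      intro x
      haveI : ∀ j, IsProbabilityMeasure (κ j x) := fun j => hp j x
      exact Measure.pi_pi _ _
    simp_rw [key]
    refine Finset.measurable_prod _ fun j _ => ?_
    have hSj : MeasurableSet (S j) := hS j (mem_univ j)
    exact (Measure.measurable_coe hSj).comp (hm j)
  · intro t ht hrec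
    have key : ∀ x : ℝ, Measure.pi (fun j => κ j x) tᶜ = 1 - Measure.pi (fun j => κ j x) t := by
      intro x
      haveI : ∀ j, IsProbabilityMeasure (κ j x) := fun j => hp j x
      haveI : IsProbabilityMeasure (Measure.pi fun j => κ j x) := by infer_instance
      rw [measure_compl ht (measure_ne_top _ _), measure_univ]
    simp_rw [key]
    exact Measurable.const_sub hrec 1
  · intro f hd hmeas hrec
    have key : ∀ x : ℝ, Measure.pi (fun j => κ j x) (⋃ i, f i)
        = ∑' i, Measure.pi (fun j => κ j x) (f i) := fun x => measure_iUnion hd hmeas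
    simp_rw [key]
    exact Measurable.ennreal_tsum hrec

def ECopy (J : ℕ) (_ : Fin J) : Type := ℝ

lemma aux_integral_pi {J : ℕ} (μ : Fin J → Measure ℝ) (hp : ∀ j, IsProbabilityMeasure (μ j))
    (f : Fin J → ℝ → ℝ) :
    ∫ x, ∏ j, f j (x j) ∂Measure.pi μ = ∏ j, ∫ x, f j x ∂(μ j) := by
  letI inst : ∀ j, MeasureSpace (ECopy J j) := fun j =>
    @MeasureSpace.mk (ECopy J j) Real.measurableSpace (μ j)
  haveI sf : ∀ j, SigmaFinite (@volume (ECopy J j) (inst j)) := fun j => by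
    have hv2 : @volume (ECopy J j) (inst j) = μ j := rfl
    rw [hv2]; haveI := hp j; exact (inferInstance : SigmaFinite (μ j))
  have h := MeasureTheory.integral_fin_nat_prod_eq_prod (E := ECopy J)
    (μ := fun i => @volume (ECopy J i) (inst i))
    (fun j => (f j : ECopy J j → ℝ))
  have hv2 : ∀ i, @volume (ECopy J i) (inst i) = μ i := fun i => rfl
  simp_rw [hv2] at h
  exact h

/-- Multivariate Laplace transform of independent subordinator values at a common random
time (core identity of the Hering–Hofert–Mai–Scherer construction): if `ν` is obtained by
sampling `t ~ μ₀` and then sampling the `J` coordinates independently from `κⱼ(t)`, where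
`κⱼ(t)` has Laplace transform `e^{-tψⱼ(y)}`, then
`∫ e^{-∑ⱼ yⱼ sⱼ} dν(s) = φ₀(∑ⱼ ψⱼ(yⱼ))`. -/
theorem subordinator_mixture_laplace_transform
    (μ₀ : Measure ℝ) [IsProbabilityMeasure μ₀]
    (hsupp : μ₀ {t | t < 0} = 0)
    (φ₀ : ℝ → ℝ)
    (hφ₀ : ∀ x, φ₀ x = ∫ t, Real.exp (-(x * t)) ∂μ₀)
    (J : ℕ) (hJ : 1 ≤ J)
    (ψ : Fin J → ℝ → ℝ)
    (hψ : ∀ j, ∀ y ≥ (0 : ℝ), 0 ≤ ψ j y)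
    (κ : Fin J → ℝ → Measure ℝ)
    (hκmeas : ∀ j, Measurable (κ j))
    (hκprob : ∀ j, ∀ t ≥ (0 : ℝ), IsProbabilityMeasure (κ j t))
    (hκsupp : ∀ j, ∀ t ≥ (0 : ℝ), κ j t {s | s < 0} = 0)
    (hκlt : ∀ j, ∀ t ≥ (0 : ℝ), ∀ y ≥ (0 : ℝ),
      ∫ s, Real.exp (-(y * s)) ∂(κ j t) = Real.exp (-(t * ψ j y)))
    (ν : Measure (Fin J → ℝ))
    (hν : ν = μ₀.bind (fun t => Measure.pi (fun j => κ j t))) :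
    ∀ y : Fin J → ℝ, (∀ j, 0 ≤ y j) →
      ∫ s, Real.exp (-(∑ j, y j * s j)) ∂ν = φ₀ (∑ j, ψ j (y j)) := by
  intro y hy
  classical
  set c : ℝ := ∑ j, ψ j (y j) with hc
  have hc0 : 0 ≤ c := Finset.sum_nonneg fun j _ => hψ j (y j) (hy j)
  set g : (Fin J → ℝ) → ℝ := fun s => Real.exp (-(∑ j, y j * s j)) with hg
  have hgmeas : Measurable g := by
    apply Real.measurable_exp.comp
    exact (Finset.measurable_sum Finset.univ fun j _ =>
      (by fun_prop : Measurable fun s : Fin J → ℝ => y j * s j)).neg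
  -- a.e. nonnegativity of times
  have haet : ∀ᵐ t ∂μ₀, 0 ≤ t := by
    rw [ae_iff]
    convert hsupp using 2
    ext t; simp [not_le]
  -- modified kernels, probability measures for all t
  set κ' : Fin J → ℝ → Measure ℝ :=
    fun j t => if 0 ≤ t then κ j t else Measure.dirac 0 with hκ'
  have hκ'meas : ∀ j, Measurable (κ' j) := fun j =>
    Measurable.ite (measurableSet_le measurable_const measurable_id) (hκmeas j) measurable_const
  have hκ'prob : ∀ j t, IsProbabilityMeasure (κ' j t) := by
    intro j t
    by_cases h : 0 ≤ t
    · simpa [κ', if_pos h] using hκprob j t h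
    · simp only [κ', if_neg h]; infer_instance
  set m : ℝ → Measure (Fin J → ℝ) := fun t => Measure.pi fun j => κ' j t with hm
  have hmmeas : Measurable m := aux_measurable_pi κ' hκ'meas hκ'prob
  have hνm : ν = μ₀.bind m := by
    rw [hν, Measure.bind, Measure.bind]
    congr 1
    apply Measure.map_congr
    filter_upwards [haet] with t ht
    simp only [m, κ', if_pos ht]
  -- the inner integral for t ≥ 0
  have hinner : ∀ t : ℝ, 0 ≤ t → ∫ s, g s ∂(m t) = Real.exp (-(t * c)) := by
    intro t ht
    have hprod : ∀ s : Fin J → ℝ, g s = ∏ j, Real.exp (-(y j * s j)) := by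
      intro s
      show Real.exp (-(∑ j, y j * s j)) = _
      rw [← Real.exp_sum]
      congr 1
      rw [← Finset.sum_neg_distrib]
    simp_rw [hprod]
    rw [hm]
    rw [aux_integral_pi _ (fun j => hκ'prob j t) (fun j x => Real.exp (-(y j * x)))]
    have heach : ∀ j, ∫ x, Real.exp (-(y j * x)) ∂(κ' j t) = Real.exp (-(t * ψ j (y j))) := by
      intro j
      simp only [κ', if_pos ht]
      exact hκlt j t ht (y j) (hy j)
    simp_rw [heach]
    rw [← Real.exp_sum]
    congr 1
    rw [Finset.sum_neg_distrib, ← Finset.mul_sum]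
  -- integrability of g w.r.t. m t for t ≥ 0
  have hai : ∀ t : ℝ, 0 ≤ t → Integrable g (m t) := by
    intro t ht
    haveI : ∀ j, IsProbabilityMeasure (κ' j t) := fun j => hκ'prob j t
    haveI : IsProbabilityMeasure (m t) := by rw [hm]; infer_instance
    refine ⟨hgmeas.aestronglyMeasurable, HasFiniteIntegral.of_bounded (C := 1) ?_⟩
    have hcoord : ∀ j, ∀ᵐ s ∂(m t), 0 ≤ s j := by
      intro j
      rw [ae_iff]
      have hset : {s : Fin J → ℝ | ¬ 0 ≤ s j} = (Function.eval j) ⁻¹' {x : ℝ | x < 0} := by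
        ext s; simp [not_le, Function.eval]
      rw [hset, hm]
      haveI : ∀ i, SigmaFinite (κ' i t) := fun i => by
        haveI := hκ'prob i t; infer_instance
      apply Measure.pi_eval_preimage_null
      simp only [κ', if_pos ht]
      exact hκsupp j t ht
    filter_upwards [ae_all_iff.mpr hcoord] with s hs
    rw [Real.norm_eq_abs, abs_of_pos (Real.exp_pos _)]
    refine Real.exp_le_one_iff.mpr (neg_nonpos.mpr ?_)
    exact Finset.sum_nonneg fun j _ => mul_nonneg (hy j) (hs j)
  -- main computation
  rw [hνm]
  have h1 : ∫ s, g s ∂(μ₀.bind m) = (∫⁻ s, ENNReal.ofReal (g s) ∂(μ₀.bind m)).toReal :=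
    integral_eq_lintegral_of_nonneg_ae (ae_of_all _ fun s => (Real.exp_pos _).le)
      hgmeas.aestronglyMeasurable
  rw [show (∫ s, Real.exp (-(∑ j, y j * s j)) ∂(μ₀.bind m)) = ∫ s, g s ∂(μ₀.bind m) from rfl,
    h1, Measure.lintegral_bind hmmeas.aemeasurable hgmeas.ennreal_ofReal.aemeasurable]
  have h2 : ∀ᵐ t ∂μ₀, ∫⁻ s, ENNReal.ofReal (g s) ∂(m t)
      = ENNReal.ofReal (Real.exp (-(t * c))) := by
    filter_upwards [haet] with t ht
    rw [← ofReal_integral_eq_lintegral_ofReal (hai t ht)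
      (ae_of_all _ fun s => (Real.exp_pos _).le), hinner t ht]
  rw [lintegral_congr_ae h2]
  have hint : Integrable (fun t => Real.exp (-(t * c))) μ₀ := by
    refine ⟨(Real.measurable_exp.comp ((measurable_id.mul_const c).neg)).aestronglyMeasurable,
      HasFiniteIntegral.of_bounded (C := 1) ?_⟩
    filter_upwards [haet] with t ht
    rw [Real.norm_eq_abs, abs_of_pos (Real.exp_pos _)]
    exact Real.exp_le_one_iff.mpr (neg_nonpos.mpr (mul_nonneg ht hc0))
  rw [← ofReal_integral_eq_lintegral_ofReal hint (ae_of_all _ fun t => (Real.exp_pos _).le),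
    ENNReal.toReal_ofReal (integral_nonneg fun t => (Real.exp_pos _).le), hφ₀]
  have : (fun t => Real.exp (-(t * c))) = fun t => Real.exp (-(c * t)) := by
    funext t; rw [mul_comm]
  rw [this]
end

section
/- Let μ_0 be a probability measure on (0,∞) with Laplace transform φ_0, and for j ∈ {1, …, J} let ψ_j : [0,∞) → [0,∞) be continuous strictly increasing with ψ_j(0) = 0 and ψ_j(y) → ∞ as y → ∞, and let κ_j be measurable families of probability measures on (0,∞) with ∫₀^∞ e^{−ys} dκ_j(t)(s) = e^{−tψ_j(y)} for all t, y ≥ 0. Suppose each φ_j := φ_0 ∘ ψ_j is a continuous strictly decreasing bijection from [0,∞) onto (0,1] with inverse φ_j^{−1}. Let (Λ_1, …, Λ_J) be a random vector with law μ_0.bind(t ↦ ⊗_j κ_j(t)), and let (E_{j,i}), j ∈ {1,…,J}, i ∈ {1,…,d_j}, be i.i.d. Exp(1) random variables independent of (Λ_1, …, Λ_J). Then for all u_{j,i} ∈ (0,1], P(φ_j(E_{j,i}/Λ_j) ≤ u_{j,i} for all j, i) = φ_0(∑_{j=1}^J ψ_j(∑_{i=1}^{d_j} φ_j^{−1}(u_{j,i}))).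 (Correctness of the hierarchical Archimedean copula sampling algorithm: the output follows the two-level hierarchical Archimedean copula with outer generator φ_0 and inner generators φ_j = φ_0 ∘ ψ_j.) -/
open MeasureTheory Set
open scoped ENNReal

theorem my_lintegral_fin_prod {n : ℕ}
    (μ : Fin n → Measure ℝ) [∀ i, SigmaFinite (μ i)]
    (f : Fin n → ℝ → ℝ≥0∞) (hf : ∀ i, Measurable (f i)) :
    ∫⁻ x : Fin n → ℝ, ∏ i, f i (x i) ∂Measure.pi μ = ∏ i, ∫⁻ x, f i x ∂μ i := by
  induction n with
  | zero => simp [lintegral_const]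
  | succ n ih =>
    have A := measurePreserving_piFinSuccAbove μ 0
    rw [MeasureTheory.MeasurePreserving.lintegral_map_equiv _
      (MeasurableEquiv.piFinSuccAbove (fun _ : Fin (n+1) => ℝ) 0).symm A.symm]
    simp_rw [MeasurableEquiv.piFinSuccAbove_symm_apply, Fin.insertNthEquiv, Equiv.coe_fn_mk,
      Fin.prod_univ_succ, Fin.insertNth_zero, Fin.cons_zero, Fin.cons_succ, cast_eq]
    rw [lintegral_prod_mul (f := f 0) (g := fun y : Fin n → ℝ => ∏ x : Fin n, f x.succ (y x))
      (hf 0).aemeasurable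
      (Finset.measurable_prod Finset.univ fun j _ =>
        ((hf j.succ).comp (measurable_pi_apply j))).aemeasurable]
    congr 1
    simp_rw [Fin.zero_succAbove]
    exact ih (fun i => μ i.succ) (fun i => f i.succ) (fun i => hf i.succ)

theorem my_exp_surv {Ω : Type*} [MeasurableSpace Ω] (P : Measure Ω) [IsProbabilityMeasure P]
    (X : Ω → ℝ)
    (h : ∀ t ≥ (0:ℝ), P {ω | t < X ω} = ENNReal.ofReal (Real.exp (-t)))
    {b : ℝ} (hb : 0 ≤ b) : P {ω | b ≤ X ω} = ENNReal.ofReal (Real.exp (-b)) := by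
  refine le_antisymm ?_ ?_
  · rcases eq_or_lt_of_le hb with rfl | hb'
    · calc P {ω | 0 ≤ X ω} ≤ 1 := prob_le_one
        _ = ENNReal.ofReal (Real.exp (-0)) := by simp
    · have key : ∀ n : ℕ, P {ω | b ≤ X ω} ≤ ENNReal.ofReal (Real.exp (-(b - b/(n+1)))) := by
        intro n
        have hn1 : (1:ℝ) ≤ (n:ℝ) + 1 := by
          have := Nat.cast_nonneg (α := ℝ) n; linarith
        have h1 : 0 ≤ b - b/(n+1) := by
          have : b/((n:ℝ)+1) ≤ b := div_le_self hb hn1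
          linarith
        have h2 : b - b/(n+1) < b := by
          have : 0 < b/((n:ℝ)+1) := by positivity
          linarith
        calc P {ω | b ≤ X ω} ≤ P {ω | b - b/(n+1) < X ω} :=
              measure_mono (fun ω hω => lt_of_lt_of_le h2 hω)
          _ = _ := h _ h1
      have hlim : Filter.Tendsto (fun n : ℕ => ENNReal.ofReal (Real.exp (-(b - b/(n+1)))))
          Filter.atTop (nhds (ENNReal.ofReal (Real.exp (-b)))) := by
        have h0 : Filter.Tendsto (fun n : ℕ => b - b/(n+1)) Filter.atTop (nhds b) := by
          have h1 : Filter.Tendsto (fun n : ℕ => b * (1/((n:ℝ)+1))) Filter.atTop (nhds (b * 0)) :=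
            tendsto_one_div_add_atTop_nhds_zero_nat.const_mul b
        
          have h2 : Filter.Tendsto (fun n : ℕ => b - b * (1/((n:ℝ)+1))) Filter.atTop
              (nhds (b - b * 0)) := (tendsto_const_nhds).sub h1
          simpa [div_eq_mul_inv] using h2
        exact (ENNReal.continuous_ofReal.tendsto _).comp
          ((Real.continuous_exp.tendsto _).comp h0.neg)
      exact ge_of_tendsto' hlim key
  · calc ENNReal.ofReal (Real.exp (-b)) = P {ω | b < X ω} := (h b hb).symm
      _ ≤ P {ω | b ≤ X ω} := measure_mono (fun ω (hω : b < X ω) => le_of_lt hω)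

theorem my_measurable_pi_kernel {J : ℕ} (κ : Fin J → ℝ → Measure ℝ)
    (hm : ∀ j, Measurable (κ j)) (hp : ∀ j t, IsProbabilityMeasure (κ j t)) :
    Measurable fun t => Measure.pi (fun j => κ j t) := by
  apply Measure.measurable_of_measurable_coe
  intro s hs
  refine MeasurableSpace.induction_on_inter
    (C := fun s _ => Measurable fun t => Measure.pi (fun j => κ j t) s)
    generateFrom_pi.symm isPiSystem_pi (by simp) ?_ ?_ ?_ _ hs
  · intro s hs
    obtain ⟨S, hS, rfl⟩ := hs
    have : ∀ t, Measure.pi (fun j => κ j t) (univ.pi S) = ∏ j, κ j t (S j) := by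
      intro t
      haveI := fun j => hp j t
      exact Measure.pi_pi _ _
    simp_rw [this]
    have hSj : ∀ j, MeasurableSet (S j) := fun j => hS j (mem_univ j)
    exact Finset.measurable_prod Finset.univ fun j _ =>
      (Measure.measurable_coe (hSj j)).comp (hm j)
  · intro s hs ih
    have : ∀ t, Measure.pi (fun j => κ j t) sᶜ = 1 - Measure.pi (fun j => κ j t) s := by
      intro t
      haveI := fun j => hp j t
      rw [measure_compl hs (measure_ne_top _ _), measure_univ]
    simp_rw [this]
    exact measurable_const.sub ih
  · intro f hdisj hmf ih
    have : ∀ t, Measure.pi (fun j => κ j t) (⋃ n, f n) = ∑' n, Measure.pi (fun j => κ j t) (f n) :=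
      fun t => measure_iUnion hdisj hmf
    simp_rw [this]
    exact Measurable.ennreal_tsum ih

theorem my_exp_integrable (μ : Measure ℝ) [IsProbabilityMeasure μ]
    (hsupp : μ {t | t ≤ 0} = 0) (x : ℝ) (hx : 0 ≤ x) :
    Integrable (fun t => Real.exp (-(x * t))) μ := by
  have hmu : ∀ᵐ t ∂μ, 0 < t := by
    rw [ae_iff]; simpa [not_lt] using hsupp
  refine Integrable.mono' (integrable_const 1) ?_ ?_
  · exact (Real.continuous_exp.comp (continuous_const.mul continuous_id).neg).aestronglyMeasurable
  · filter_upwards [hmu] with t ht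
    rw [Real.norm_eq_abs, abs_of_pos (Real.exp_pos _)]
    exact Real.exp_le_one_iff.mpr (neg_nonpos.mpr (mul_nonneg hx ht.le))

/-- Correctness of the hierarchical Archimedean copula sampling algorithm
(Hering–Hofert–Mai–Scherer): with outer generator `φ₀` (Laplace transform of `μ₀` on
`(0,∞)`), Laplace exponents `ψⱼ` of subordinators with laws `κⱼ(t)`, inner generators
`φⱼ = φ₀ ∘ ψⱼ` (bijections `[0,∞) → (0,1]` with inverses `φⱼ⁻¹`), subordinator values
`Λ = (Λ₁, …, Λ_J)` sampled at a common `μ₀`-distributed time, and i.i.d. `Exp(1)`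
variables `E_{j,i}` independent of `Λ`, the vector `(φⱼ(E_{j,i}/Λⱼ))_{j,i}` has joint CDF
`φ₀(∑ⱼ ψⱼ(∑ᵢ φⱼ⁻¹(u_{j,i})))`, the two-level hierarchical Archimedean copula. -/
theorem hierarchical_archimedean_sampling
    (μ₀ : Measure ℝ) [IsProbabilityMeasure μ₀]
    (hsupp : μ₀ {t | t ≤ 0} = 0)
    (φ₀ : ℝ → ℝ)
    (hφ₀ : ∀ x, φ₀ x = ∫ t, Real.exp (-(x * t)) ∂μ₀)
    (J : ℕ) (hJ : 1 ≤ J) (d : Fin J → ℕ)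
    (ψ : Fin J → ℝ → ℝ)
    (hψcont : ∀ j, ContinuousOn (ψ j) (Ici 0))
    (hψmono : ∀ j, StrictMonoOn (ψ j) (Ici 0))
    (hψ0 : ∀ j, ψ j 0 = 0)
    (hψnonneg : ∀ j, ∀ y ≥ (0 : ℝ), 0 ≤ ψ j y)
    (hψtop : ∀ j, Filter.Tendsto (ψ j) Filter.atTop Filter.atTop)
    (κ : Fin J → ℝ → Measure ℝ)
    (hκmeas : ∀ j, Measurable (κ j))
    (hκprob : ∀ j, ∀ t ≥ (0 : ℝ), IsProbabilityMeasure (κ j t))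
    (hκsupp : ∀ j, ∀ t ≥ (0 : ℝ), κ j t {s | s ≤ 0} = 0)
    (hκlt : ∀ j, ∀ t ≥ (0 : ℝ), ∀ y ≥ (0 : ℝ),
      ∫ s, Real.exp (-(y * s)) ∂(κ j t) = Real.exp (-(t * ψ j y)))
    (φinv : Fin J → ℝ → ℝ)
    (hinv : ∀ j, ∀ u ∈ Ioc (0 : ℝ) 1, 0 ≤ φinv j u ∧ φ₀ (ψ j (φinv j u)) = u)
    (hinv' : ∀ j, ∀ x ≥ (0 : ℝ), φinv j (φ₀ (ψ j x)) = x)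
    {Ω : Type*} [MeasurableSpace Ω] (P : Measure Ω) [IsProbabilityMeasure P]
    (Λ : Ω → (Fin J → ℝ)) (hΛmeas : Measurable Λ)
    (hΛ : P.map Λ = μ₀.bind (fun t => Measure.pi (fun j => κ j t)))
    (E : (j : Fin J) → Fin (d j) → Ω → ℝ)
    (hEmeas : ∀ j i, Measurable (E j i))
    (hE : ∀ j i, ∀ t ≥ (0 : ℝ), P {ω | t < E j i ω} = ENNReal.ofReal (Real.exp (-t)))
    (hEindep : ProbabilityTheory.iIndepFun
      (fun p : (Σ j : Fin J, Fin (d j)) => E p.1 p.2) P)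
    (hEΛindep : ProbabilityTheory.IndepFun
      (fun ω => fun p : (Σ j : Fin J, Fin (d j)) => E p.1 p.2 ω) Λ P) :
    ∀ u : (j : Fin J) → Fin (d j) → ℝ, (∀ j i, u j i ∈ Ioc (0 : ℝ) 1) →
      P {ω | ∀ j i, φ₀ (ψ j (E j i ω / Λ ω j)) ≤ u j i}
        = ENNReal.ofReal (φ₀ (∑ j, ψ j (∑ i, φinv j (u j i)))) := by
  intro u hu
  classical
  set c : (j : Fin J) → Fin (d j) → ℝ := fun j i => φinv j (u j i) with hcdef
  have hc0 : ∀ j i, 0 ≤ c j i := fun j i => (hinv j _ (hu j i)).1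
  have hcu : ∀ j i, φ₀ (ψ j (c j i)) = u j i := fun j i => (hinv j _ (hu j i)).2
  have hmu : ∀ᵐ t ∂μ₀, 0 < t := by rw [ae_iff]; simpa [not_lt] using hsupp
  -- φ₀ is antitone on [0, ∞)
  have hanti : ∀ x y : ℝ, 0 ≤ x → x ≤ y → φ₀ y ≤ φ₀ x := by
    intro x y hx hxy
    rw [hφ₀ x, hφ₀ y]
    refine integral_mono_ae (my_exp_integrable μ₀ hsupp y (hx.trans hxy))
      (my_exp_integrable μ₀ hsupp x hx) ?_
    filter_upwards [hmu] with t ht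
    exact Real.exp_le_exp.mpr (by nlinarith)
  have hganti : ∀ j : Fin J, StrictAntiOn (fun x => φ₀ (ψ j x)) (Ici 0) := by
    intro j x hx y hy hxy
    rw [mem_Ici] at hx hy
    have h1 : φ₀ (ψ j y) ≤ φ₀ (ψ j x) :=
      hanti _ _ (hψnonneg j x hx) ((hψmono j hx hy hxy).le)
    rcases lt_or_eq_of_le h1 with h | h
    · exact h
    · exfalso
      have h2 := hinv' j x hx
      have h3 := hinv' j y hy
      rw [h] at h3
      rw [h2] at h3
      exact absurd h3 (ne_of_lt hxy)
  have hiff : ∀ (j : Fin J) (i : Fin (d j)) (yv : ℝ), 0 ≤ yv →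
      (φ₀ (ψ j yv) ≤ u j i ↔ c j i ≤ yv) := by
    intro j i yv hyv
    rw [← hcu j i]
    exact (hganti j).le_iff_ge (mem_Ici.mpr hyv) (mem_Ici.mpr (hc0 j i))
  -- the exponentials are a.s. positive
  have hEae : ∀ᵐ ω ∂P, ∀ (j : Fin J) (i : Fin (d j)), 0 < E j i ω := by
    rw [ae_all_iff]
    intro j
    rw [ae_all_iff]
    intro i
    have h1 : P {ω | 0 < E j i ω} = 1 := by
      rw [hE j i 0 le_rfl]; simp
    have hms : MeasurableSet {ω | 0 < E j i ω} :=
      measurableSet_lt measurable_const (hEmeas j i)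
    rw [ae_iff]
    have hrw : {ω | ¬ 0 < E j i ω} = {ω | 0 < E j i ω}ᶜ := by ext ω; simp
    rw [hrw, prob_compl_eq_zero_iff hms]
    exact h1
  -- the modified (everywhere probability) kernel
  set κ' : Fin J → ℝ → Measure ℝ := fun j t => if 0 < t then κ j t else κ j 1 with hκ'def
  have hκ'meas : ∀ j, Measurable (κ' j) := fun j =>
    Measurable.ite measurableSet_Ioi (hκmeas j) measurable_const
  have hκ'prob : ∀ j t, IsProbabilityMeasure (κ' j t) := by
    intro j t
    by_cases h : 0 < t
    · simp only [hκ'def, if_pos h]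
      exact hκprob j t h.le
    · simp only [hκ'def, if_neg h]
      exact hκprob j 1 zero_le_one
  have hgmeas : Measurable fun t => Measure.pi (fun j => κ' j t) :=
    my_measurable_pi_kernel κ' hκ'meas hκ'prob
  have hbind : (μ₀.bind fun t => Measure.pi (fun j => κ j t))
      = μ₀.bind fun t => Measure.pi (fun j => κ' j t) := by
    have hae : (fun t => Measure.pi (fun j => κ j t))
        =ᵐ[μ₀] fun t => Measure.pi (fun j => κ' j t) := by
      filter_upwards [hmu] with t ht
      have : (fun j => κ j t) = fun j => κ' j t := by
        funext j; simp only [hκ'def, if_pos ht]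
      rw [this]
    show ((μ₀.map fun t => Measure.pi (fun j => κ j t)).join
        = (μ₀.map fun t => Measure.pi (fun j => κ' j t)).join)
    rw [Measure.map_congr hae]
  have hNset : MeasurableSet {x : Fin J → ℝ | ¬ ∀ j, 0 < x j} := by
    have hrw : {x : Fin J → ℝ | ¬ ∀ j, 0 < x j}
        = ⋃ j, (fun x : Fin J → ℝ => x j) ⁻¹' Iic 0 := by
      ext x; simp [not_lt]
    rw [hrw]
    exact MeasurableSet.iUnion fun j => (measurable_pi_apply j) measurableSet_Iic
  have hN : (μ₀.bind fun t => Measure.pi (fun j => κ' j t))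
      {x : Fin J → ℝ | ¬ ∀ j, 0 < x j} = 0 := by
    rw [Measure.bind_apply hNset hgmeas.aemeasurable]
    have hae0 : ∀ᵐ t ∂μ₀,
        Measure.pi (fun j => κ' j t) {x : Fin J → ℝ | ¬ ∀ j, 0 < x j} = 0 := by
      filter_upwards [hmu] with t ht
      haveI := fun j => hκ'prob j t
      have hrw : {x : Fin J → ℝ | ¬ ∀ j, 0 < x j}
          = ⋃ j, Function.eval j ⁻¹' Iic (0:ℝ) := by
        ext x; simp [not_lt, Function.eval]
      rw [hrw]
      apply measure_iUnion_null
      intro j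
      have h0 : κ' j t (Iic 0) = 0 := by
        simp only [hκ'def, if_pos ht]
        exact hκsupp j t ht.le
      exact Measure.pi_eval_preimage_null (μ := fun j => κ' j t) h0
    rw [lintegral_congr_ae hae0, lintegral_zero]
  have hΛae : ∀ᵐ ω ∂P, ∀ j, 0 < Λ ω j := by
    rw [ae_iff]
    have hpre : {ω | ¬ ∀ j, 0 < Λ ω j} = Λ ⁻¹' {x : Fin J → ℝ | ¬ ∀ j, 0 < x j} := rfl
    rw [hpre, ← Measure.map_apply hΛmeas hNset, hΛ, hbind, hN]
  -- the vector of exponentials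
  set Evec : Ω → ((p : Σ j : Fin J, Fin (d j)) → ℝ) := fun ω p => E p.1 p.2 ω with hEvecdef
  have hEvmeas : Measurable Evec := measurable_pi_lambda _ fun p => hEmeas p.1 p.2
  -- joint survival function of the exponentials
  have hν : ∀ b : (Σ j : Fin J, Fin (d j)) → ℝ, (∀ p, 0 ≤ b p) →
      P {ω | ∀ p : Σ j : Fin J, Fin (d j), b p ≤ E p.1 p.2 ω}
        = ENNReal.ofReal (Real.exp (-(∑ p : Σ j : Fin J, Fin (d j), b p))) := by
    intro b hb
    have hset : {ω | ∀ p : Σ j : Fin J, Fin (d j), b p ≤ E p.1 p.2 ω}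
        = ⋂ p ∈ Finset.univ, E p.1 p.2 ⁻¹' Ici (b p) := by
      ext ω; simp [Set.mem_iInter, Set.mem_preimage]
    rw [hset, hEindep.measure_inter_preimage_eq_mul (sets := fun p => Ici (b p))
      Finset.univ (fun p _ => measurableSet_Ici)]
    have heach : ∀ p : Σ j : Fin J, Fin (d j),
        P (E p.1 p.2 ⁻¹' Ici (b p)) = ENNReal.ofReal (Real.exp (-(b p))) := by
      intro p
      exact my_exp_surv P (E p.1 p.2) (hE p.1 p.2) (hb p)
    rw [Finset.prod_congr rfl (fun p _ => heach p),
      ← ENNReal.ofReal_prod_of_nonneg (fun p _ => (Real.exp_pos _).le), ← Real.exp_sum,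
      Finset.sum_neg_distrib]
  set sν : Fin J → ℝ := fun j => ∑ i, c j i with hsdef
  have hs0 : ∀ j, 0 ≤ sν j := fun j => Finset.sum_nonneg fun i _ => hc0 j i
  set S : Set ((Fin J → ℝ) × ((p : Σ j : Fin J, Fin (d j)) → ℝ)) :=
    {q | ∀ p : Σ j : Fin J, Fin (d j), c p.1 p.2 * q.1 p.1 ≤ q.2 p} with hSdef
  have hSmeas : MeasurableSet S := by
    have hrw : S = ⋂ p : Σ j : Fin J, Fin (d j),
        {q : (Fin J → ℝ) × ((p : Σ j : Fin J, Fin (d j)) → ℝ) |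
          c p.1 p.2 * q.1 p.1 ≤ q.2 p} := by
      ext q; simp [hSdef, Set.mem_iInter]
    rw [hrw]
    exact MeasurableSet.iInter fun p => measurableSet_le
      (((measurable_pi_apply p.1).comp measurable_fst).const_mul _)
      ((measurable_pi_apply p).comp measurable_snd)
  haveI : IsProbabilityMeasure (P.map Λ) := Measure.isProbabilityMeasure_map hΛmeas.aemeasurable
  haveI : IsProbabilityMeasure (P.map Evec) := Measure.isProbabilityMeasure_map hEvmeas.aemeasurable
  -- replace the event by the multiplicative one
  have hPB : P {ω | ∀ j i, φ₀ (ψ j (E j i ω / Λ ω j)) ≤ u j i}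
      = P ((fun ω => (Λ ω, Evec ω)) ⁻¹' S) := by
    apply measure_congr
    rw [Filter.eventuallyEq_set]
    filter_upwards [hΛae, hEae] with ω hΛω hEω
    simp only [Set.mem_setOf_eq, Set.mem_preimage, hSdef, hEvecdef]
    constructor
    · intro hA p
      obtain ⟨j, i⟩ := p
      have hpos : 0 < Λ ω j := hΛω j
      have hdiv : 0 ≤ E j i ω / Λ ω j := (div_pos (hEω j i) hpos).le
      have hle := (hiff j i _ hdiv).mp (hA j i)
      calc c j i * Λ ω j ≤ (E j i ω / Λ ω j) * Λ ω j :=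
            mul_le_mul_of_nonneg_right hle hpos.le
        _ = E j i ω := div_mul_cancel₀ _ hpos.ne'
    · intro hB j i
      have hpos : 0 < Λ ω j := hΛω j
      have hle : c j i ≤ E j i ω / Λ ω j := (le_div_iff₀ hpos).mpr (hB ⟨j, i⟩)
      exact (hiff j i _ ((hc0 j i).trans hle)).mpr hle
  have hmap : P.map (fun ω => (Λ ω, Evec ω)) = (P.map Λ).prod (P.map Evec) :=
    (ProbabilityTheory.indepFun_iff_map_prod_eq_prod_map_map hΛmeas.aemeasurable
      hEvmeas.aemeasurable).mp hEΛindep.symm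
  have hPBval : P ((fun ω => (Λ ω, Evec ω)) ⁻¹' S)
      = ∫⁻ x, (P.map Evec) (Prod.mk x ⁻¹' S) ∂(P.map Λ) := by
    rw [← Measure.map_apply (hΛmeas.prodMk hEvmeas) hSmeas, hmap,
      Measure.prod_apply hSmeas]
  have hslice : ∀ x : Fin J → ℝ, (∀ j, 0 < x j) →
      (P.map Evec) (Prod.mk x ⁻¹' S)
        = ENNReal.ofReal (Real.exp (-(∑ j, sν j * x j))) := by
    intro x hx
    have hpre : Prod.mk x ⁻¹' S = {e : (p : Σ j : Fin J, Fin (d j)) → ℝ |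
        ∀ p : Σ j : Fin J, Fin (d j), c p.1 p.2 * x p.1 ≤ e p} := rfl
    have hmse : MeasurableSet {e : (p : Σ j : Fin J, Fin (d j)) → ℝ |
        ∀ p : Σ j : Fin J, Fin (d j), c p.1 p.2 * x p.1 ≤ e p} := by
      have heq : {e : (p : Σ j : Fin J, Fin (d j)) → ℝ |
          ∀ p : Σ j : Fin J, Fin (d j), c p.1 p.2 * x p.1 ≤ e p}
          = ⋂ p : Σ j : Fin J, Fin (d j),
            (fun e : (p : Σ j : Fin J, Fin (d j)) → ℝ => e p) ⁻¹' Ici (c p.1 p.2 * x p.1) := by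
        ext e; simp [Set.mem_iInter]
      rw [heq]
      exact MeasurableSet.iInter fun p => measurable_pi_apply p measurableSet_Ici
    rw [hpre, Measure.map_apply hEvmeas hmse]
    have hEq : Evec ⁻¹' {e : (p : Σ j : Fin J, Fin (d j)) → ℝ |
        ∀ p : Σ j : Fin J, Fin (d j), c p.1 p.2 * x p.1 ≤ e p}
        = {ω | ∀ p : Σ j : Fin J, Fin (d j), c p.1 p.2 * x p.1 ≤ E p.1 p.2 ω} := rfl
    rw [hEq, hν (fun p => c p.1 p.2 * x p.1)
      (fun p => mul_nonneg (hc0 p.1 p.2) (hx p.1).le)]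
    have hsum : (∑ p : Σ j : Fin J, Fin (d j), c p.1 p.2 * x p.1) = ∑ j, sν j * x j := by
      rw [← Finset.univ_sigma_univ, Finset.sum_sigma]
      exact Finset.sum_congr rfl fun j _ => by
        show (∑ i : Fin (d j), c j i * x j) = sν j * x j
        rw [← Finset.sum_mul]
    rw [hsum]
  have haeΛ : ∀ᵐ x ∂(P.map Λ), ∀ j, 0 < x j := by
    rw [ae_iff, hΛ, hbind]
    exact hN
  have hstep : ∫⁻ x, (P.map Evec) (Prod.mk x ⁻¹' S) ∂(P.map Λ)
      = ∫⁻ x, ENNReal.ofReal (Real.exp (-(∑ j, sν j * x j))) ∂(P.map Λ) := by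
    apply lintegral_congr_ae
    filter_upwards [haeΛ] with x hx
    exact hslice x hx
  have hfmeas : Measurable fun x : Fin J → ℝ =>
      ENNReal.ofReal (Real.exp (-(∑ j, sν j * x j))) := by
    apply ENNReal.measurable_ofReal.comp
    apply Real.measurable_exp.comp
    apply Measurable.neg
    exact Finset.measurable_sum Finset.univ fun j _ =>
      by fun_prop
  rw [hPB, hPBval, hstep, hΛ, hbind, Measure.lintegral_bind hgmeas.aemeasurable hfmeas.aemeasurable]
  have hinner : ∀ᵐ t ∂μ₀,
      ∫⁻ x : Fin J → ℝ, ENNReal.ofReal (Real.exp (-(∑ j, sν j * x j)))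
        ∂(Measure.pi fun j => κ' j t)
      = ENNReal.ofReal (Real.exp (-(t * ∑ j, ψ j (sν j)))) := by
    filter_upwards [hmu] with t ht
    haveI := fun j => hκ'prob j t
    have h1 : ∀ x : Fin J → ℝ, ENNReal.ofReal (Real.exp (-(∑ j, sν j * x j)))
        = ∏ j, ENNReal.ofReal (Real.exp (-(sν j * x j))) := by
      intro x
      rw [← ENNReal.ofReal_prod_of_nonneg (fun j _ => (Real.exp_pos _).le), ← Real.exp_sum,
        Finset.sum_neg_distrib]
    simp_rw [h1]
    rw [my_lintegral_fin_prod (fun j => κ' j t)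
      (fun j y => ENNReal.ofReal (Real.exp (-(sν j * y))))
      (fun j => ENNReal.measurable_ofReal.comp (Real.measurable_exp.comp
        ((measurable_id.const_mul (sν j)).neg)))]
    have h2 : ∀ j : Fin J, ∫⁻ y : ℝ, ENNReal.ofReal (Real.exp (-(sν j * y))) ∂(κ' j t)
        = ENNReal.ofReal (Real.exp (-(t * ψ j (sν j)))) := by
      intro j
      have hsupp' : κ' j t {s : ℝ | s ≤ 0} = 0 := by
        simp only [hκ'def, if_pos ht]
        exact hκsupp j t ht.le
      rw [← ofReal_integral_eq_lintegral_ofReal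
        (my_exp_integrable (κ' j t) hsupp' (sν j) (hs0 j))
        (Filter.Eventually.of_forall fun y => (Real.exp_pos _).le)]
      congr 1
      have hκeq : ∫ y, Real.exp (-(sν j * y)) ∂(κ' j t)
          = ∫ y, Real.exp (-(sν j * y)) ∂(κ j t) := by
        simp only [hκ'def, if_pos ht]
      rw [hκeq]
      exact hκlt j t ht.le (sν j) (hs0 j)
    rw [Finset.prod_congr rfl fun j _ => h2 j,
      ← ENNReal.ofReal_prod_of_nonneg (fun j _ => (Real.exp_pos _).le), ← Real.exp_sum,
      Finset.sum_neg_distrib, ← Finset.mul_sum]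
  rw [lintegral_congr_ae hinner]
  have hSψ : 0 ≤ ∑ j, ψ j (sν j) := Finset.sum_nonneg fun j _ => hψnonneg j (sν j) (hs0 j)
  have hcomm : ∀ t : ℝ, Real.exp (-(t * ∑ j, ψ j (sν j)))
      = Real.exp (-((∑ j, ψ j (sν j)) * t)) := fun t => by rw [mul_comm]
  simp_rw [hcomm]
  rw [← ofReal_integral_eq_lintegral_ofReal (my_exp_integrable μ₀ hsupp _ hSψ)
    (Filter.Eventually.of_forall fun t => (Real.exp_pos _).le), ← hφ₀]
end
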